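/- arXiv:math/0612643 — 4 statements merged into one kernel-verified Lean document; each statement's English description precedes it below -/
import Mathlib

section
/- Let (a,b,c,d) ∈ P. For all functions f, g : ℝ_q → ℂ and all integers k ≤ l and n ≤ m, the truncated inner products satisfy ⟨Lf, g⟩_{k,l;m,n} − ⟨f, Lg⟩_{k,l;m,n} = D(f, conj(g))(z₋q^l) − D(f, conj(g))(z₋q^{k−1}) + D(f, conj(g))(z₊q^{n−1}) − D(f, conj(g))(z₊q^m), where conj(g) denotes the pointwise complex conjugate of g. -/
open Complex Filter

noncomputable section

namespace VVBQJ

/-- The infinite q-shifted factorial `(x;q)_∞`. -/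
def poch (q x : ℂ) : ℂ := ∏' j : ℕ, (1 - x * q ^ j)

/-- The q-shifted factorial `(x;q)_n`, `n ∈ ℕ`. -/
def pochN (q x : ℂ) (n : ℕ) : ℂ := ∏ j ∈ Finset.range n, (1 - x * q ^ j)

/-- The normalized Jacobi theta function `θ(x) = (x;q)_∞ (q/x;q)_∞`. -/
def theta (q x : ℂ) : ℂ := poch q x * poch q (q / x)

/-- The condition on the pairs `(a,b)` and `(c,d)` in the parameter set `P`. -/
def pairCond (q zm zp : ℝ) (α β : ℂ) : Prop :=
  α = (starRingEnd ℂ) β ∨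
    (∃ (A B : ℝ) (k₀ : ℤ), α = (A : ℂ) ∧ β = (B : ℂ) ∧
      zp * q ^ k₀ < 1 / B ∧ 1 / B < 1 / A ∧ 1 / A < zp * q ^ (k₀ - 1)) ∨
    (∃ (A B : ℝ) (k₀ : ℤ), α = (A : ℂ) ∧ β = (B : ℂ) ∧
      zm * q ^ (k₀ - 1) < 1 / A ∧ 1 / A < 1 / B ∧ 1 / B < zm * q ^ k₀)

/-- The parameter domain `P`. -/
def memP (q zm zp : ℝ) (a b c d : ℂ) : Prop :=
  a ≠ 0 ∧ b ≠ 0 ∧ c ≠ 0 ∧ d ≠ 0 ∧ a ≠ b ∧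
    (∀ x ∈ ({a, b, c, d} : Set ℂ), ∀ k : ℤ,
      x ≠ ((zp : ℂ))⁻¹ * (q : ℂ) ^ k ∧ x ≠ ((zm : ℂ))⁻¹ * (q : ℂ) ^ k) ∧
    pairCond q zm zp a b ∧ pairCond q zm zp c d

/-- The generic parameter domain `P_gen`. -/
def memPgen (q zm zp : ℝ) (a b c d : ℂ) : Prop :=
  memP q zm zp a b c d ∧ c ≠ d ∧
    ∀ k : ℤ, c / a ≠ (q : ℂ) ^ k ∧ c / b ≠ (q : ℂ) ^ k ∧ d / a ≠ (q : ℂ) ^ k ∧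
      d / b ≠ (q : ℂ) ^ k ∧ c * d / (a * b) ≠ (q : ℂ) ^ k

/-- `s = √(cdq/(ab))`, with the principal branch of the square root. -/
def sP (q : ℝ) (a b c d : ℂ) : ℂ := (c * d * (q : ℂ) / (a * b)) ^ ((1 : ℂ) / 2)

def Acoef (q : ℝ) (a b c d : ℂ) (x : ℝ) : ℂ :=
  (sP q a b c d)⁻¹ * (1 - (q : ℂ) / (a * (x : ℂ))) * (1 - (q : ℂ) / (b * (x : ℂ)))

def Bcoef (q : ℝ) (a b c d : ℂ) (x : ℝ) : ℂ :=
  sP q a b c d * (1 - 1 / (c * (x : ℂ))) * (1 - 1 / (d * (x : ℂ)))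

def Ccoef (q : ℝ) (a b c d : ℂ) (x : ℝ) : ℂ :=
  sP q a b c d + (sP q a b c d)⁻¹ - Acoef q a b c d x - Bcoef q a b c d x

/-- The second order q-difference operator `L`. -/
def Lop (q : ℝ) (a b c d : ℂ) (f : ℝ → ℂ) (x : ℝ) : ℂ :=
  Acoef q a b c d x * f (x / q) + Bcoef q a b c d x * f (q * x) + Ccoef q a b c d x * f x

/-- The weight function `w`. -/
def w (q : ℝ) (a b c d : ℂ) (x : ℝ) : ℂ :=
  poch q (a * (x : ℂ)) * poch q (b * (x : ℂ)) / (poch q (c * (x : ℂ)) * poch q (d * (x : ℂ)))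

/-- The function `u(x) = (1-q)² B(x) x² w(x)`. -/
def u (q : ℝ) (a b c d : ℂ) (x : ℝ) : ℂ :=
  (1 - (q : ℂ)) ^ 2 * Bcoef q a b c d x * (x : ℂ) ^ 2 * w q a b c d x

/-- The Casorati determinant `D(f,g)`. -/
def casD (q : ℝ) (a b c d : ℂ) (f g : ℝ → ℂ) (x : ℝ) : ℂ :=
  (f x * g (q * x) - f (q * x) * g x) * u q a b c d x / ((1 - (q : ℂ)) * (x : ℂ))

/-- The truncated inner product `⟨f,g⟩_{k,l;m,n}`. -/
def trunc (q zm zp : ℝ) (a b c d : ℂ) (f g : ℝ → ℂ) (k l m n : ℤ) : ℂ :=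
  (1 - (q : ℂ)) *
    ((∑ j ∈ Finset.Icc n m, f (zp * q ^ j) * (starRingEnd ℂ) (g (zp * q ^ j)) *
        w q a b c d (zp * q ^ j) * ((zp * q ^ j : ℝ) : ℂ)) -
      ∑ j ∈ Finset.Icc k l, f (zm * q ^ j) * (starRingEnd ℂ) (g (zm * q ^ j)) *
        w q a b c d (zm * q ^ j) * ((zm * q ^ j : ℝ) : ℂ))

/-- The constant `K_z`. -/
def Kz (q : ℝ) (a b c d : ℂ) (z : ℝ) : ℂ :=
  (z : ℂ) * (1 - (q : ℂ)) * (theta q (a * z) * theta q (b * z)) /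
    (theta q (c * z) * theta q (d * z))

/-- Membership in the Hilbert space `ℒ²(ℝ_q, w(x) d_q x)`. -/
def memL2 (q zm zp : ℝ) (a b c d : ℂ) (f : ℝ → ℂ) : Prop :=
  Summable (fun k : ℤ => ‖f (zp * q ^ k)‖ ^ 2 * ‖w q a b c d (zp * q ^ k)‖ * |zp * q ^ k|) ∧
    Summable (fun k : ℤ => ‖f (zm * q ^ k)‖ ^ 2 * ‖w q a b c d (zm * q ^ k)‖ * |zm * q ^ k|)

/-- The inner product on `ℒ²`. -/
def innerL2 (q zm zp : ℝ) (a b c d : ℂ) (f g : ℝ → ℂ) : ℂ :=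
  (1 - (q : ℂ)) *
    ((∑' k : ℤ, f (zp * q ^ k) * (starRingEnd ℂ) (g (zp * q ^ k)) *
        w q a b c d (zp * q ^ k) * ((zp * q ^ k : ℝ) : ℂ)) -
      ∑' k : ℤ, f (zm * q ^ k) * (starRingEnd ℂ) (g (zm * q ^ k)) *
        w q a b c d (zm * q ^ k) * ((zm * q ^ k : ℝ) : ℂ))

/-- The squared `ℒ²`-norm. -/
def normSqL2 (q zm zp : ℝ) (a b c d : ℂ) (f : ℝ → ℂ) : ℝ :=
  (1 - q) *
    ((∑' k : ℤ, ‖f (zp * q ^ k)‖ ^ 2 * ‖w q a b c d (zp * q ^ k)‖ * (zp * q ^ k)) +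
      ∑' k : ℤ, ‖f (zm * q ^ k)‖ ^ 2 * ‖w q a b c d (zm * q ^ k)‖ * (-(zm * q ^ k)))

/-- The q-difference operator `D_q`. -/
def Dq (q : ℝ) (f : ℝ → ℂ) (x : ℝ) : ℂ := (f x - f (q * x)) / ((1 - (q : ℂ)) * (x : ℂ))

/-- The q-line `ℝ_q`. -/
def Rq (q zm zp : ℝ) : Set ℝ := {x | ∃ k : ℤ, x = zm * q ^ k ∨ x = zp * q ^ k}

/-- Membership in the domain `𝒟`. -/
def memD (q zm zp : ℝ) (a b c d : ℂ) (f : ℝ → ℂ) : Prop :=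
  memL2 q zm zp a b c d f ∧ memL2 q zm zp a b c d (Lop q a b c d f) ∧
    (∃ v : ℂ, Tendsto (fun k : ℕ => f (zm * q ^ k)) atTop (nhds v) ∧
        Tendsto (fun k : ℕ => f (zp * q ^ k)) atTop (nhds v)) ∧
    (∃ v : ℂ, Tendsto (fun k : ℕ => Dq q f (zm * q ^ k)) atTop (nhds v) ∧
        Tendsto (fun k : ℕ => Dq q f (zp * q ^ k)) atTop (nhds v))

/-- Membership in the eigenspace `V_μ` (functions on `ℝ_q`). -/
def memV (q zm zp : ℝ) (a b c d : ℂ) (μ : ℂ) (f : ℝ → ℂ) : Prop :=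
  (∀ x ∈ Rq q zm zp, Lop q a b c d f x = μ * f x) ∧
    (∃ v : ℂ, Tendsto (fun k : ℕ => f (zm * q ^ k)) atTop (nhds v) ∧
        Tendsto (fun k : ℕ => f (zp * q ^ k)) atTop (nhds v)) ∧
    (∃ v : ℂ, Tendsto (fun k : ℕ => Dq q f (zm * q ^ k)) atTop (nhds v) ∧
        Tendsto (fun k : ℕ => Dq q f (zp * q ^ k)) atTop (nhds v))

/-- The set of regular spectral values `S_reg = ℂ* \ {± q^{k/2}}`. -/
def Sreg (q : ℝ) (γ : ℂ) : Prop :=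
  γ ≠ 0 ∧ ∀ k : ℤ, γ ≠ ((q ^ ((k : ℝ) / 2) : ℝ) : ℂ) ∧ γ ≠ -((q ^ ((k : ℝ) / 2) : ℝ) : ℂ)

/-- The big q-Jacobi function `φ_γ(x)`. -/
def phi (q : ℝ) (a b c d : ℂ) (γ x : ℂ) : ℂ :=
  ∑' n : ℕ,
    pochN q (q / (a * x)) n * pochN q (sP q a b c d * γ) n * pochN q (sP q a b c d / γ) n /
      (pochN q q n * pochN q (c * q / a) n * pochN q (d * q / a) n) * (b * x) ^ n

/-- The asymptotic solution `Φ_γ(z q^{-k})`, in index form. -/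
def PhiIdx (q : ℝ) (a b c d : ℂ) (γ : ℂ) (z : ℝ) (k : ℤ) : ℂ :=
  let s : ℂ := sP q a b c d
  let x : ℂ := (z : ℂ) * (q : ℂ) ^ (-k)
  (s * γ) ^ k *
    (poch q ((q : ℂ) / (b * x)) * poch q ((q : ℂ) ^ 2 * γ / (a * s * x)) /
      (poch q ((q : ℂ) / (c * x)) * poch q ((q : ℂ) / (d * x)))) *
    ∑' n : ℕ,
      pochN q ((q : ℂ) * γ / s) n * pochN q (c * q * γ / (s * a)) n *
          pochN q (d * q * γ / (s * a)) n /
        (pochN q q n * pochN q ((q : ℂ) ^ 2 * γ / (a * s * x)) n * pochN q ((q : ℂ) * γ ^ 2) n) *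
        ((q : ℂ) / (b * x)) ^ n

/-- Casorati determinant at `x = z q^{-k}` for index-form functions. -/
def casDIdx (q : ℝ) (a b c d : ℂ) (f g : ℤ → ℂ) (z : ℝ) (k : ℤ) : ℂ :=
  (f k * g (k - 1) - f (k - 1) * g k) * u q a b c d (z * q ^ (-k)) /
    ((1 - (q : ℂ)) * ((z * q ^ (-k) : ℝ) : ℂ))

/-- The c-function `c_z(γ)`. -/
def cz (q : ℝ) (a b c d : ℂ) (z : ℝ) (γ : ℂ) : ℂ :=
  let s : ℂ := sP q a b c d
  poch q (s / γ) * poch q (c * q / (a * s * γ)) * poch q (d * q / (a * s * γ)) *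
      theta q (b * s * z * γ) /
    (poch q (c * q / a) * poch q (d * q / a) * poch q (1 / γ ^ 2) * theta q (b * z))

/-- The expansion coefficient `d_z(γ)`. -/
def dz (q : ℝ) (a b c d : ℂ) (z : ℝ) (γ : ℂ) : ℂ :=
  let s : ℂ := sP q a b c d
  (poch q (c * q / a) * poch q (d * q / a) * theta q (b * z) /
      (theta q (a / b) * theta q (c * z) * theta q (d * z))) *
    (poch q (c * q * γ / (s * b)) * poch q (d * q * γ / (s * b)) *
        theta q (a * s * z / (q * γ)) /
      (poch q (q * γ ^ 2) * poch q (s / γ)))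

/-- The Casorati determinant `v(γ) = D(Φ_γ^+, Φ_γ^-)`. -/
def vFun (q zm zp : ℝ) (a b c d : ℂ) (γ : ℂ) : ℂ :=
  let s : ℂ := sP q a b c d;
  -((zp : ℂ) * (1 - (q : ℂ)) * theta q ((zm : ℂ) / zp) /
      (theta q (c * zm) * theta q (d * zm) * theta q (c * zp) * theta q (d * zp))) *
    (poch q (c * q * γ / (a * s)) * poch q (d * q * γ / (a * s)) * poch q (c * q * γ / (b * s)) *
        poch q (d * q * γ / (b * s)) * poch q (s * γ) * poch q (q * γ / s) *
        theta q (a * b * s * zm * zp / (q * γ)) /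
      (γ * (poch q (q * γ ^ 2)) ^ 2))

/-- The function `v₁(γ)` in the continuous part of the spectral measure. -/
def v1Fun (q zm zp : ℝ) (a b c d : ℂ) (γ : ℂ) : ℂ :=
  let s : ℂ := sP q a b c d
  ((poch q (c * q / a)) ^ 2 * (poch q (d * q / a)) ^ 2 * theta q (b * zp) * theta q (b * zm) /
      ((1 - (q : ℂ)) * a * b * (zm : ℂ) ^ 2 * (zp : ℂ) ^ 2 *
        (theta q ((zm : ℂ) / zp) * theta q ((zp : ℂ) / zm) * theta q (a / b) * theta q (b / a)))) *
    (poch q (γ ^ 2) * poch q (γ⁻¹ ^ 2) /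
      (poch q (s * γ) * poch q (s / γ) * poch q (c * q * γ / (a * s)) *
        poch q (c * q / (a * s * γ)) * poch q (d * q * γ / (a * s)) *
        poch q (d * q / (a * s * γ)) *
        (theta q (s * γ) * theta q (s / γ) * theta q (a * b * s * zm * zp * γ) *
          theta q (a * b * s * zm * zp / γ)))) *
    ((zm : ℂ) * (theta q (a * zp) * theta q (c * zp) * theta q (d * zp) * theta q (b * zm) *
          theta q (a * s * zm * γ) * theta q (a * s * zm / γ)) -
      (zp : ℂ) * (theta q (a * zm) * theta q (c * zm) * theta q (d * zm) * theta q (b * zp) *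
          theta q (a * s * zp * γ) * theta q (a * s * zp / γ)))

/-- The function `v₂(γ)` in the continuous part of the spectral measure. -/
def v2Fun (q zm zp : ℝ) (a b c d : ℂ) (γ : ℂ) : ℂ :=
  let s : ℂ := sP q a b c d
  (poch q (c * q / a) * poch q (d * q / a) * poch q (c * q / b) * poch q (d * q / b) *
      (theta q (a * zp) * theta q (a * zm) * theta q (b * zp) * theta q (b * zm) *
        theta q (c * d * zm * zp)) /
      (a * b * (zm : ℂ) ^ 2 * (zp : ℂ) * (1 - (q : ℂ)) *
        (theta q ((zp : ℂ) / zm) * theta q (a / b) * theta q (b / a)))) *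
    (poch q (γ ^ 2) * poch q (γ⁻¹ ^ 2) /
      (poch q (s * γ) * poch q (s / γ) *
        (theta q (s * γ) * theta q (s / γ) * theta q (a * b * s * zm * zp * γ) *
          theta q (a * b * s * zm * zp / γ))))

/-- The function `u₁(γ)`. -/
def u1Fun (q zm zp : ℝ) (a b c d : ℂ) (γ : ℂ) : ℂ :=
  Kz q a b c d zp * cz q a b c d zp γ * cz q a b c d zp γ⁻¹ -
    Kz q a b c d zm * cz q a b c d zm γ * cz q a b c d zm γ⁻¹

/-- The function `u₂(γ)`. -/
def u2Fun (q zm zp : ℝ) (a b c d : ℂ) (γ : ℂ) : ℂ :=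
  Kz q a b c d zp * cz q a b c d zp γ * cz q b a c d zp γ⁻¹ -
    Kz q a b c d zm * cz q a b c d zm γ * cz q b a c d zm γ⁻¹

/-- The big q-Jacobi polynomial `P_k(y; α, β, δ; q)`. -/
def bigqJacobiP (q : ℝ) (α β δ : ℂ) (k : ℕ) (y : ℂ) : ℂ :=
  ∑ j ∈ Finset.range (k + 1),
    pochN q (((q : ℂ) ^ k)⁻¹) j * pochN q (α * β * (q : ℂ) ^ (k + 1)) j * pochN q y j /
      (pochN q q j * pochN q (α * q) j * pochN q (δ * q) j) * (q : ℂ) ^ j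

section StatementZeroAux

lemma aux_hasProd_zero {f : ℕ → ℂ} (h : ∃ j, f j = 0) : HasProd f 0 := by
  obtain ⟨j, hj⟩ := h
  have h2 : ∀ᶠ s in (atTop : Filter (Finset ℕ)), ∏ i ∈ s, f i = 0 := by
    filter_upwards [Filter.eventually_ge_atTop ({j} : Finset ℕ)] with s hs
    exact Finset.prod_eq_zero (hs (Finset.mem_singleton_self j)) hj
  exact Tendsto.congr' (h2.mono fun s h => h.symm) tendsto_const_nhds

lemma aux_mult {q : ℝ} (hq0 : 0 < q) (hq1 : q < 1) (x : ℂ) :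
    Multipliable (fun j : ℕ => 1 - x * (q : ℂ) ^ j) := by
  by_cases h : ∃ j, (1 : ℂ) - x * (q : ℂ) ^ j = 0
  · exact ⟨0, aux_hasProd_zero h⟩
  push_neg at h
  refine Complex.multipliable_of_summable_log (f := fun j => 1 - x * (q:ℂ)^j)
    ?_
  have hgeo : Summable (fun n : ℕ => (3/2) * ‖x‖ * q ^ n) :=
    ((summable_geometric_of_lt_one hq0.le hq1).mul_left _)
  apply Summable.of_norm_bounded_eventually_nat hgeo
  have htend : Tendsto (fun n : ℕ => ‖x‖ * q ^ n) atTop (nhds 0) := by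
    simpa using (tendsto_pow_atTop_nhds_zero_of_lt_one hq0.le hq1).const_mul ‖x‖
  filter_upwards [htend.eventually_le_const (by norm_num : (0:ℝ) < 1/2)] with n hn
  have hb : ‖-(x * (q:ℂ) ^ n)‖ ≤ 1/2 := by
    rw [norm_neg]
    calc ‖x * (q:ℂ)^n‖ = ‖x‖ * q ^ n := by
          rw [norm_mul, norm_pow, Complex.norm_real, Real.norm_eq_abs, abs_of_pos hq0]
      _ ≤ 1/2 := hn
  have hlog := Complex.norm_log_one_add_half_le_self hb
  rw [show (1 : ℂ) + -(x * (q:ℂ)^n) = 1 - x * (q:ℂ)^n by ring] at hlog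
  calc ‖Complex.log (1 - x * (q:ℂ)^n)‖ ≤ 3/2 * ‖-(x * (q:ℂ)^n)‖ := hlog
    _ ≤ 3/2 * ‖x‖ * q ^ n := by
        rw [norm_neg, norm_mul, norm_pow, Complex.norm_real, Real.norm_eq_abs,
          abs_of_pos hq0]
        ring_nf; exact le_refl _

set_option maxHeartbeats 1000000 in
lemma aux_poch_shift {q : ℝ} (hq0 : 0 < q) (hq1 : q < 1) (x : ℂ) :
    poch (q:ℂ) x = (1 - x) * poch (q:ℂ) ((q:ℂ) * x) := by
  unfold poch
  have hm : Multipliable (fun n : ℕ => 1 - x * (q:ℂ) ^ (n + 1)) :=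
    (aux_mult hq0 hq1 ((q:ℂ) * x)).congr (fun n => by ring)
  rw [tprod_eq_zero_mul' hm]
  simp only [pow_zero, mul_one]
  congr 1
  apply tprod_congr
  intro n
  ring

lemma aux_poch_div {q : ℝ} (hq0 : 0 < q) (hq1 : q < 1) (y : ℂ) :
    poch (q:ℂ) (y / (q:ℂ)) = (1 - y / (q:ℂ)) * poch (q:ℂ) y := by
  have hq : (q:ℂ) ≠ 0 := Complex.ofReal_ne_zero.mpr hq0.ne'
  have h := aux_poch_shift hq0 hq1 (y / (q:ℂ))
  rwa [mul_div_cancel₀ _ hq] at h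

lemma aux_helper (s A B C D X Q p1 p2 p3 p4 : ℂ) (hA : A ≠ 0) (hB : B ≠ 0) (hC : C ≠ 0)
    (hD : D ≠ 0) (hX : X ≠ 0) (hQ : Q ≠ 0) (h3 : p3 ≠ 0) (h4 : p4 ≠ 0) :
    X / Q * (s * (-(Q / (C * X)) * p3) * (-(Q / (D * X)) * p4)) * (p1 * p2 / (p3 * p4)) =
      X * (s * A * B / (C * D * Q) * (-(Q / (A * X)) * p1) * (-(Q / (B * X)) * p2)) := by
  have h1 : X / Q * (s * (-(Q / (C * X)) * p3) * (-(Q / (D * X)) * p4)) * (p1 * p2 / (p3 * p4))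
      = (X * s * Q * Q * p3 * p4 * p1 * p2) / (Q * C * X * D * X * (p3 * p4)) := by
    ring
  have h2 : X * (s * A * B / (C * D * Q) * (-(Q / (A * X)) * p1) * (-(Q / (B * X)) * p2))
      = (X * s * A * B * Q * Q * p1 * p2) / (C * D * Q * (A * X) * (B * X)) := by
    ring
  rw [h1, h2, div_eq_div_iff (by simp [hQ, hC, hX, hD, h3, h4])
    (by simp [hA, hB, hC, hD, hQ, hX])]
  ring

lemma aux_pearson {q : ℝ} {a b c d : ℂ} (hq0 : 0 < q) (hq1 : q < 1)
    (ha : a ≠ 0) (hb : b ≠ 0) (hc : c ≠ 0) (hd : d ≠ 0)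
    (hs2 : sP q a b c d * sP q a b c d = c * d * (q:ℂ) / (a * b))
    (x : ℝ) (hx : x ≠ 0)
    (hc1 : 1 - c * (x:ℂ) / (q:ℂ) ≠ 0) (hd1 : 1 - d * (x:ℂ) / (q:ℂ) ≠ 0) :
    ((x / q : ℝ) : ℂ) * Bcoef q a b c d (x / q) * w q a b c d (x / q) =
      (x : ℂ) * Acoef q a b c d x * w q a b c d x := by
  have hq : (q:ℂ) ≠ 0 := Complex.ofReal_ne_zero.mpr hq0.ne'
  have hxc : (x:ℂ) ≠ 0 := Complex.ofReal_ne_zero.mpr hx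
  have hcast : ((x / q : ℝ) : ℂ) = (x:ℂ) / (q:ℂ) := by push_cast; ring
  have hw : w q a b c d (x / q) =
      ((1 - a * (x:ℂ) / q) * (1 - b * (x:ℂ) / q)) /
        ((1 - c * (x:ℂ) / q) * (1 - d * (x:ℂ) / q)) * w q a b c d x := by
    unfold w
    rw [hcast]
    have ea : a * ((x:ℂ) / q) = (a * x) / q := by ring
    have eb : b * ((x:ℂ) / q) = (b * x) / q := by ring
    have ec : c * ((x:ℂ) / q) = (c * x) / q := by ring
    have ed : d * ((x:ℂ) / q) = (d * x) / q := by ring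
    rw [ea, eb, ec, ed, aux_poch_div hq0 hq1, aux_poch_div hq0 hq1, aux_poch_div hq0 hq1,
      aux_poch_div hq0 hq1]
    simp only [div_eq_mul_inv, mul_inv]
    ring
  have hs2' : sP q a b c d * sP q a b c d * (a * b) = c * d * (q:ℂ) := by
    rw [hs2]; field_simp
  have hsinv : (sP q a b c d)⁻¹ = sP q a b c d * a * b / (c * d * (q:ℂ)) := by
    have h1 : sP q a b c d * (sP q a b c d * a * b / (c * d * (q:ℂ))) = 1 := by
      rw [mul_div_assoc']
      rw [div_eq_one_iff_eq (by simp [hc, hd, hq])]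
      linear_combination hs2'
    exact inv_eq_of_mul_eq_one_right h1
  have hsc : ((x:ℂ) / q) * Bcoef q a b c d (x / q) *
      (((1 - a * (x:ℂ) / q) * (1 - b * (x:ℂ) / q)) /
        ((1 - c * (x:ℂ) / q) * (1 - d * (x:ℂ) / q))) = (x : ℂ) * Acoef q a b c d x := by
    unfold Bcoef Acoef
    have e1 : (1 : ℂ) - 1 / (c * ((x:ℂ) / q)) = -(q / (c * x)) * (1 - c * (x:ℂ) / q) := by
      field_simp
      ring
    have e2 : (1 : ℂ) - 1 / (d * ((x:ℂ) / q)) = -(q / (d * x)) * (1 - d * (x:ℂ) / q) := by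
      field_simp
      ring
    have e3 : (1 : ℂ) - q / (a * (x:ℂ)) = -(q / (a * x)) * (1 - a * (x:ℂ) / q) := by
      field_simp
      ring
    have e4 : (1 : ℂ) - q / (b * (x:ℂ)) = -(q / (b * x)) * (1 - b * (x:ℂ) / q) := by
      field_simp
      ring
    rw [hcast, hsinv, e1, e2, e3, e4]
    exact aux_helper _ a b c d _ _ _ _ _ _ ha hb hc hd hxc hq hc1 hd1
  rw [hw, hcast]
  linear_combination (w q a b c d x) * hsc

lemma aux_casD_eq {q : ℝ} {a b c d : ℂ} (hq1 : q < 1) (f g : ℝ → ℂ) (x : ℝ) (hx : x ≠ 0) :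
    casD q a b c d f g x =
      (1 - (q:ℂ)) * (x:ℂ) * Bcoef q a b c d x * w q a b c d x *
        (f x * g (q * x) - f (q * x) * g x) := by
  have h1q : (1 : ℂ) - (q:ℂ) ≠ 0 := by
    rw [show (1:ℂ) - (q:ℂ) = ((1 - q : ℝ) : ℂ) by push_cast; ring]
    exact Complex.ofReal_ne_zero.mpr (by linarith)
  have hxc : (x:ℂ) ≠ 0 := Complex.ofReal_ne_zero.mpr hx
  unfold casD u
  rw [div_eq_iff (mul_ne_zero h1q hxc)]
  ring

lemma aux_key {q : ℝ} {a b c d : ℂ} (hq0 : 0 < q) (hq1 : q < 1)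
    (ha : a ≠ 0) (hb : b ≠ 0) (hc : c ≠ 0) (hd : d ≠ 0)
    (hs2 : sP q a b c d * sP q a b c d = c * d * (q:ℂ) / (a * b))
    (f g : ℝ → ℂ) (x : ℝ) (hx : x ≠ 0)
    (hc1 : 1 - c * (x:ℂ) / (q:ℂ) ≠ 0) (hd1 : 1 - d * (x:ℂ) / (q:ℂ) ≠ 0)
    (hcA : (starRingEnd ℂ) (Acoef q a b c d x) = Acoef q a b c d x)
    (hcB : (starRingEnd ℂ) (Bcoef q a b c d x) = Bcoef q a b c d x)
    (hcC : (starRingEnd ℂ) (Ccoef q a b c d x) = Ccoef q a b c d x) :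
    (1 - (q:ℂ)) * (Lop q a b c d f x * (starRingEnd ℂ) (g x) * w q a b c d x * (x:ℂ)
        - f x * (starRingEnd ℂ) (Lop q a b c d g x) * w q a b c d x * (x:ℂ))
      = casD q a b c d f (fun t => (starRingEnd ℂ) (g t)) (x / q)
        - casD q a b c d f (fun t => (starRingEnd ℂ) (g t)) x := by
  have hq : q ≠ 0 := hq0.ne'
  have hmul : q * (x / q) = x := by field_simp
  have hL : (starRingEnd ℂ) (Lop q a b c d g x)
      = Acoef q a b c d x * (starRingEnd ℂ) (g (x / q))
        + Bcoef q a b c d x * (starRingEnd ℂ) (g (q * x))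
        + Ccoef q a b c d x * (starRingEnd ℂ) (g x) := by
    unfold Lop
    rw [map_add, map_add, map_mul, map_mul, map_mul, hcA, hcB, hcC]
  rw [hL, aux_casD_eq hq1 _ _ _ (div_ne_zero hx hq), aux_casD_eq hq1 _ _ _ hx, hmul]
  have hp := aux_pearson hq0 hq1 ha hb hc hd hs2 x hx hc1 hd1
  unfold Lop
  linear_combination -((1 : ℂ) - (q:ℂ)) *
    (f (x / q) * (starRingEnd ℂ) (g x) - f x * (starRingEnd ℂ) (g (x / q))) * hp

lemma aux_pair_conj {q zm zp : ℝ} {α β : ℂ} (h : pairCond q zm zp α β) :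
    ((starRingEnd ℂ) α = α ∧ (starRingEnd ℂ) β = β) ∨
      ((starRingEnd ℂ) α = β ∧ (starRingEnd ℂ) β = α) := by
  rcases h with h | ⟨A, B, k, hA, hB, _⟩ | ⟨A, B, k, hA, hB, _⟩
  · right
    constructor
    · rw [h, Complex.conj_conj]
    · rw [h]
  · left; rw [hA, hB]; simp [Complex.conj_ofReal]
  · left; rw [hA, hB]; simp [Complex.conj_ofReal]

lemma aux_pair_pos {q zm zp : ℝ} (hq0 : 0 < q) (hzm : zm < 0) (hzp : 0 < zp)
    {α β : ℂ} (hβ : β ≠ 0) (h : pairCond q zm zp α β) :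
    ∃ r : ℝ, 0 < r ∧ α * β = (r : ℂ) := by
  rcases h with h | ⟨A, B, k, hA, hB, h1, h2, h3⟩ | ⟨A, B, k, hA, hB, h1, h2, h3⟩
  · refine ⟨Complex.normSq β, Complex.normSq_pos.mpr hβ, ?_⟩
    rw [h, mul_comm, Complex.mul_conj]
  · have hq : (0:ℝ) < zp * q ^ k := mul_pos hzp (zpow_pos hq0 k)
    have hB0 : 0 < B := one_div_pos.mp (lt_trans hq h1)
    have hA0 : 0 < A := one_div_pos.mp (lt_trans (lt_trans hq h1) h2)
    refine ⟨A * B, mul_pos hA0 hB0, ?_⟩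
    rw [hA, hB]; push_cast; ring
  · have hq : zm * q ^ k < 0 := mul_neg_of_neg_of_pos hzm (zpow_pos hq0 k)
    have hB0 : B < 0 := one_div_neg.mp (lt_trans h3 hq)
    have hA0 : A < 0 := one_div_neg.mp (lt_trans h2 (lt_trans h3 hq))
    refine ⟨A * B, mul_pos_of_neg_of_neg hA0 hB0, ?_⟩
    rw [hA, hB]; push_cast; ring

lemma aux_s_real {q : ℝ} (hq0 : 0 < q) {a b c d : ℂ} {r1 r2 : ℝ}
    (h1 : 0 < r1) (h2 : 0 < r2) (hab : a * b = (r1 : ℂ)) (hcd : c * d = (r2 : ℂ)) :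
    ∃ sR : ℝ, 0 < sR ∧ sP q a b c d = (sR : ℂ) ∧
      sP q a b c d * sP q a b c d = c * d * (q:ℂ) / (a * b) := by
  have hbase : c * d * (q:ℂ) / (a * b) = ((r2 * q / r1 : ℝ) : ℂ) := by
    rw [hab, hcd]; push_cast; ring
  have hpos : (0:ℝ) < r2 * q / r1 := by positivity
  have hsv : sP q a b c d = (((r2 * q / r1) ^ ((1:ℝ)/2) : ℝ) : ℂ) := by
    unfold sP
    rw [hbase, show ((1:ℂ)/2) = (((1:ℝ)/2 : ℝ) : ℂ) by norm_num]
    rw [← Complex.ofReal_cpow hpos.le]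
  refine ⟨(r2 * q / r1) ^ ((1:ℝ)/2), Real.rpow_pos_of_pos hpos _, hsv, ?_⟩
  rw [hsv, ← Complex.ofReal_mul, ← Real.rpow_add hpos, hbase]
  norm_num

lemma aux_conjA {q : ℝ} {a b c d : ℂ}
    (hcs : (starRingEnd ℂ) (sP q a b c d) = sP q a b c d)
    (hpair : ((starRingEnd ℂ) a = a ∧ (starRingEnd ℂ) b = b) ∨
      ((starRingEnd ℂ) a = b ∧ (starRingEnd ℂ) b = a))
    (x : ℝ) : (starRingEnd ℂ) (Acoef q a b c d x) = Acoef q a b c d x := by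
  simp only [Acoef, map_mul, map_inv₀, map_sub, map_one, map_div₀,
    Complex.conj_ofReal, hcs]
  rcases hpair with ⟨h1, h2⟩ | ⟨h1, h2⟩ <;> rw [h1, h2] <;> ring

lemma aux_conjB {q : ℝ} {a b c d : ℂ}
    (hcs : (starRingEnd ℂ) (sP q a b c d) = sP q a b c d)
    (hpair : ((starRingEnd ℂ) c = c ∧ (starRingEnd ℂ) d = d) ∨
      ((starRingEnd ℂ) c = d ∧ (starRingEnd ℂ) d = c))
    (x : ℝ) : (starRingEnd ℂ) (Bcoef q a b c d x) = Bcoef q a b c d x := by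
  simp only [Bcoef, map_mul, map_sub, map_one, map_div₀, Complex.conj_ofReal, hcs]
  rcases hpair with ⟨h1, h2⟩ | ⟨h1, h2⟩ <;> rw [h1, h2] <;> ring

lemma aux_tele (F : ℤ → ℂ) {n m : ℤ} (h : n ≤ m) :
    ∑ j ∈ Finset.Icc n m, (F (j - 1) - F j) = F (n - 1) - F m := by
  obtain ⟨t, rfl⟩ : ∃ t : ℕ, m = n + t := ⟨(m - n).toNat, by omega⟩
  clear h
  induction t with
  | zero => simp
  | succ t ih =>
      push_cast
      rw [show (n + ((t:ℤ) + 1)) = (n + (t:ℤ)) + 1 by ring,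
        show Finset.Icc n ((n + (t:ℤ)) + 1)
            = insert ((n + (t:ℤ)) + 1) (Finset.Icc n (n + (t:ℤ))) by
          ext u; simp only [Finset.mem_Icc, Finset.mem_insert]; omega,
        Finset.sum_insert (by simp only [Finset.mem_Icc]; omega)]
      push_cast at ih
      rw [ih, show ((n + (t:ℤ)) + 1) - 1 = n + (t:ℤ) by ring]
      ring

lemma aux_latt {q z : ℝ} (hq0 : 0 < q) (hz : z ≠ 0) {e : ℂ}
    (he : ∀ k : ℤ, e ≠ ((z : ℂ))⁻¹ * (q : ℂ) ^ k) (j : ℤ) :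
    1 - e * ((z * q ^ j : ℝ) : ℂ) / (q : ℂ) ≠ 0 := by
  have hqc : (q:ℂ) ≠ 0 := Complex.ofReal_ne_zero.mpr hq0.ne'
  have hzc : (z:ℂ) ≠ 0 := Complex.ofReal_ne_zero.mpr hz
  have hqj : ((q:ℂ)) ^ j ≠ 0 := zpow_ne_zero _ hqc
  intro h0
  apply he (1 - j)
  have hcast : ((z * q ^ j : ℝ) : ℂ) = (z:ℂ) * (q:ℂ) ^ j := by push_cast; ring
  rw [hcast] at h0
  rw [zpow_sub₀ hqc, zpow_one]
  field_simp at h0 ⊢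
  linear_combination -h0

end StatementZeroAux

/-- the Casorati/Green identity for truncated inner products. -/
theorem statement0 (q zm zp : ℝ) (a b c d : ℂ)
    (hq0 : 0 < q) (hq1 : q < 1) (hzm : zm < 0) (hzp : 0 < zp)
    (hP : memP q zm zp a b c d)
    (f g : ℝ → ℂ) (k l m n : ℤ) (hkl : k ≤ l) (hnm : n ≤ m) :
    trunc q zm zp a b c d (Lop q a b c d f) g k l m n -
        trunc q zm zp a b c d f (Lop q a b c d g) k l m n =
      casD q a b c d f (fun x => (starRingEnd ℂ) (g x)) (zm * q ^ l) -
          casD q a b c d f (fun x => (starRingEnd ℂ) (g x)) (zm * q ^ (k - 1)) +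
        casD q a b c d f (fun x => (starRingEnd ℂ) (g x)) (zp * q ^ (n - 1)) -
        casD q a b c d f (fun x => (starRingEnd ℂ) (g x)) (zp * q ^ m) := by
  obtain ⟨ha, hb, hc, hd, -, hnot, hpab, hpcd⟩ := hP
  have hq : q ≠ 0 := hq0.ne'
  have hzmne : zm ≠ 0 := ne_of_lt hzm
  have hzpne : zp ≠ 0 := ne_of_gt hzp
  obtain ⟨r1, hr1, hab⟩ := aux_pair_pos hq0 hzm hzp hb hpab
  obtain ⟨r2, hr2, hcd⟩ := aux_pair_pos hq0 hzm hzp hd hpcd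
  obtain ⟨sR, hsR, hsval, hs2⟩ := aux_s_real hq0 hr1 hr2 hab hcd
  have hcs : (starRingEnd ℂ) (sP q a b c d) = sP q a b c d := by
    rw [hsval]; exact Complex.conj_ofReal _
  have hcA := aux_conjA hcs (aux_pair_conj hpab)
  have hcB := aux_conjB hcs (aux_pair_conj hpcd)
  have hcC : ∀ x : ℝ, (starRingEnd ℂ) (Ccoef q a b c d x) = Ccoef q a b c d x := by
    intro x
    simp only [Ccoef, map_sub, map_add, map_inv₀, hcs, hcA x, hcB x]
  have hczp : ∀ j : ℤ, 1 - c * ((zp * q ^ j : ℝ) : ℂ) / (q : ℂ) ≠ 0 :=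
    aux_latt hq0 hzpne (fun k => (hnot c (by simp) k).1)
  have hdzp : ∀ j : ℤ, 1 - d * ((zp * q ^ j : ℝ) : ℂ) / (q : ℂ) ≠ 0 :=
    aux_latt hq0 hzpne (fun k => (hnot d (by simp) k).1)
  have hczm : ∀ j : ℤ, 1 - c * ((zm * q ^ j : ℝ) : ℂ) / (q : ℂ) ≠ 0 :=
    aux_latt hq0 hzmne (fun k => (hnot c (by simp) k).2)
  have hdzm : ∀ j : ℤ, 1 - d * ((zm * q ^ j : ℝ) : ℂ) / (q : ℂ) ≠ 0 :=
    aux_latt hq0 hzmne (fun k => (hnot d (by simp) k).2)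
  have hxz : ∀ (z : ℝ), z ≠ 0 → ∀ j : ℤ, z * q ^ j ≠ 0 :=
    fun z hz j => mul_ne_zero hz (zpow_ne_zero _ hq)
  have hdivz : ∀ (z : ℝ) (j : ℤ), z * q ^ j / q = z * q ^ (j - 1) :=
    fun z j => by rw [zpow_sub₀ hq, zpow_one]; ring
  have keyP : ∀ j ∈ Finset.Icc n m,
      (1 - (q:ℂ)) * (Lop q a b c d f (zp * q ^ j) * (starRingEnd ℂ) (g (zp * q ^ j)) *
            w q a b c d (zp * q ^ j) * ((zp * q ^ j : ℝ) : ℂ)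
          - f (zp * q ^ j) * (starRingEnd ℂ) (Lop q a b c d g (zp * q ^ j)) *
            w q a b c d (zp * q ^ j) * ((zp * q ^ j : ℝ) : ℂ))
        = casD q a b c d f (fun x => (starRingEnd ℂ) (g x)) (zp * q ^ (j - 1))
          - casD q a b c d f (fun x => (starRingEnd ℂ) (g x)) (zp * q ^ j) := by
    intro j _
    have h := aux_key hq0 hq1 ha hb hc hd hs2 f g (zp * q ^ j) (hxz zp hzpne j)
      (hczp j) (hdzp j) (hcA _) (hcB _) (hcC _)
    rwa [hdivz zp j] at h
  have keyM : ∀ j ∈ Finset.Icc k l,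
      (1 - (q:ℂ)) * (Lop q a b c d f (zm * q ^ j) * (starRingEnd ℂ) (g (zm * q ^ j)) *
            w q a b c d (zm * q ^ j) * ((zm * q ^ j : ℝ) : ℂ)
          - f (zm * q ^ j) * (starRingEnd ℂ) (Lop q a b c d g (zm * q ^ j)) *
            w q a b c d (zm * q ^ j) * ((zm * q ^ j : ℝ) : ℂ))
        = casD q a b c d f (fun x => (starRingEnd ℂ) (g x)) (zm * q ^ (j - 1))
          - casD q a b c d f (fun x => (starRingEnd ℂ) (g x)) (zm * q ^ j) := by
    intro j _
    have h := aux_key hq0 hq1 ha hb hc hd hs2 f g (zm * q ^ j) (hxz zm hzmne j)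
      (hczm j) (hdzm j) (hcA _) (hcB _) (hcC _)
    rwa [hdivz zm j] at h
  have HP : (1 - (q:ℂ)) *
      ((∑ j ∈ Finset.Icc n m, Lop q a b c d f (zp * q ^ j) *
          (starRingEnd ℂ) (g (zp * q ^ j)) * w q a b c d (zp * q ^ j) *
          ((zp * q ^ j : ℝ) : ℂ)) -
        ∑ j ∈ Finset.Icc n m, f (zp * q ^ j) *
          (starRingEnd ℂ) (Lop q a b c d g (zp * q ^ j)) * w q a b c d (zp * q ^ j) *
          ((zp * q ^ j : ℝ) : ℂ))
      = casD q a b c d f (fun x => (starRingEnd ℂ) (g x)) (zp * q ^ (n - 1))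
        - casD q a b c d f (fun x => (starRingEnd ℂ) (g x)) (zp * q ^ m) := by
    rw [← Finset.sum_sub_distrib, Finset.mul_sum]
    exact (Finset.sum_congr rfl keyP).trans
      (aux_tele (fun i => casD q a b c d f (fun x => (starRingEnd ℂ) (g x)) (zp * q ^ i)) hnm)
  have HM : (1 - (q:ℂ)) *
      ((∑ j ∈ Finset.Icc k l, Lop q a b c d f (zm * q ^ j) *
          (starRingEnd ℂ) (g (zm * q ^ j)) * w q a b c d (zm * q ^ j) *
          ((zm * q ^ j : ℝ) : ℂ)) -
        ∑ j ∈ Finset.Icc k l, f (zm * q ^ j) *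
          (starRingEnd ℂ) (Lop q a b c d g (zm * q ^ j)) * w q a b c d (zm * q ^ j) *
          ((zm * q ^ j : ℝ) : ℂ))
      = casD q a b c d f (fun x => (starRingEnd ℂ) (g x)) (zm * q ^ (k - 1))
        - casD q a b c d f (fun x => (starRingEnd ℂ) (g x)) (zm * q ^ l) := by
    rw [← Finset.sum_sub_distrib, Finset.mul_sum]
    exact (Finset.sum_congr rfl keyM).trans
      (aux_tele (fun i => casD q a b c d f (fun x => (starRingEnd ℂ) (g x)) (zm * q ^ i)) hkl)
  unfold trunc
  linear_combination HP - HM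
end VVBQJ
end
end

section
/- Let (a,b,c,d) ∈ P and z ∈ {z₋, z₊}. Then there exist a constant M > 0 and N ∈ ℕ such that for all k ≥ N: |(1−q)·s^{2k}·zq^{−k}·w(zq^{−k}) − K_z| ≤ M·q^k and |s^{2k−1}·u(zq^{−k})/(zq^{−k}) − (1−q)·K_z| ≤ M·q^k; in other words, zq^{−k}·w(zq^{−k}) = (1−q)⁻¹·K_z·s^{−2k}·(1 + O(q^k)) and u(zq^{−k})/(zq^{−k}) = (1−q)·K_z·s^{1−2k}·(1 + O(q^k)) as k → ∞. -/
open Complex Filter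

noncomputable section

namespace VVBQJ

section Helpers

variable {q : ℝ}

lemma summable_log (hq0 : 0 ≤ q) (hq1 : q < 1) (x : ℂ) :
    Summable (fun n : ℕ => Complex.log (1 - x * (q : ℂ) ^ n)) := by
  have hq : ∀ n : ℕ, ‖(q:ℂ)^n‖ = q ^ n := by
    intro n; rw [norm_pow, Complex.norm_real, Real.norm_of_nonneg hq0]
  obtain ⟨N, hN⟩ : ∃ N : ℕ, ‖x‖ * q ^ N ≤ 1/2 := by
    rcases eq_or_lt_of_le hq0 with h | h
    · exact ⟨1, by rw [← h]; norm_num⟩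
    have := tendsto_pow_atTop_nhds_zero_of_lt_one hq0 hq1
    have h2 := ((this.const_mul ‖x‖).mono_right (by rw [mul_zero])).eventually_le_const
      (show (0:ℝ) < 1/2 by norm_num)
    simpa using ((h2.and (eventually_ge_atTop 0)).exists).imp fun n hn => hn.1
  rw [← summable_nat_add_iff N]
  apply Summable.of_norm_bounded (g := fun n => (3/2) * (‖x‖ * q^N) * q ^ n)
  · exact (summable_geometric_of_lt_one hq0 hq1).mul_left _
  intro n
  have hb : ‖-(x * (q:ℂ)^(n+N))‖ ≤ 1/2 := by
    rw [norm_neg, norm_mul, hq, pow_add]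
    calc ‖x‖ * (q^n * q^N) ≤ ‖x‖ * (1 * q^N) := by
          apply mul_le_mul_of_nonneg_left (by
            apply mul_le_mul_of_nonneg_right (pow_le_one₀ hq0 hq1.le)
              (pow_nonneg hq0 N)) (norm_nonneg x)
      _ ≤ 1/2 := by simpa using hN
  have := Complex.norm_log_one_add_half_le_self hb
  rw [show (1 : ℂ) + -(x * (q:ℂ)^(n+N)) = 1 - x * (q:ℂ)^(n+N) by ring] at this
  refine this.trans ?_
  rw [norm_neg, norm_mul, hq, pow_add]
  ring_nf
  nlinarith [norm_nonneg x, pow_nonneg hq0 n, pow_nonneg hq0 N]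

lemma multipliable_poch (hq0 : 0 ≤ q) (hq1 : q < 1) (x : ℂ)
    (hx : ∀ n : ℕ, 1 - x * (q : ℂ) ^ n ≠ 0) :
    Multipliable (fun n : ℕ => 1 - x * (q : ℂ) ^ n) := by
  exact Complex.multipliable_of_summable_log (summable_log hq0 hq1 x)

lemma poch_shift (hq0 : 0 ≤ q) (hq1 : q < 1) (x : ℂ)
    (hx : ∀ n : ℕ, 1 - x * (q : ℂ) ^ n ≠ 0) (k : ℕ) :
    poch q x = pochN q x k * poch q (x * (q:ℂ)^k) := by
  have hsh : (fun n : ℕ => 1 - (x * (q:ℂ)^k) * (q:ℂ)^n) = fun n => 1 - x * (q:ℂ)^(n+k) := by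
    funext n; rw [pow_add]; ring
  have hm : Multipliable (fun n : ℕ => 1 - x * (q:ℂ)^(n+k)) := by
    rw [← hsh]
    exact multipliable_poch hq0 hq1 _ (by intro n; rw [mul_assoc, ← pow_add]; exact hx (k+n))
  have := Multipliable.prod_mul_tprod_nat_mul' (f := fun n : ℕ => 1 - x * (q:ℂ)^n) (k := k) hm
  rw [poch, ← this, pochN, poch, hsh]

lemma finprod_bound (ε : ℕ → ℂ) (s : Finset ℕ) :
    ‖(∏ i ∈ s, (1 - ε i)) - 1‖ ≤ (∏ i ∈ s, (1 + ‖ε i‖)) - 1 := by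
  induction s using Finset.cons_induction with
  | empty => simp
  | cons a s ha ih =>
    rw [Finset.prod_cons, Finset.prod_cons]
    have h1 : (1:ℝ) ≤ ∏ i ∈ s, (1 + ‖ε i‖) := by
      calc (1:ℝ) = ∏ _i ∈ s, 1 := by simp
        _ ≤ _ := Finset.prod_le_prod (by intros; norm_num)
            (fun i _ => by linarith [norm_nonneg (ε i)])
    have key : ‖(1 - ε a) * ∏ i ∈ s, (1 - ε i) - 1‖
        ≤ ‖(∏ i ∈ s, (1 - ε i)) - 1‖ * (1 + ‖ε a‖) + ‖ε a‖ := by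
      have : (1 - ε a) * (∏ i ∈ s, (1 - ε i)) - 1
          = ((∏ i ∈ s, (1 - ε i)) - 1) * (1 - ε a) - ε a := by ring
      rw [this]
      refine (norm_sub_le _ _).trans ?_
      rw [norm_mul]
      gcongr
      refine (norm_sub_le _ _).trans ?_
      simp [add_comm]
    refine key.trans ?_
    have h2 : (0:ℝ) ≤ 1 + ‖ε a‖ := by positivity
    nlinarith [ih, norm_nonneg (ε a)]

lemma prod_le_exp (ε : ℕ → ℂ) (s : Finset ℕ) :
    (∏ i ∈ s, (1 + ‖ε i‖)) ≤ Real.exp (∑ i ∈ s, ‖ε i‖) := by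
  rw [Real.exp_sum]
  exact Finset.prod_le_prod (fun i _ => by positivity)
    (fun i _ => by simpa [add_comm] using Real.add_one_le_exp ‖ε i‖)

lemma norm_poch_sub_one (hq0 : 0 ≤ q) (hq1 : q < 1) (x : ℂ)
    (hx : ∀ n : ℕ, 1 - x * (q : ℂ) ^ n ≠ 0) :
    ‖poch q x - 1‖ ≤ Real.exp (‖x‖ / (1 - q)) - 1 := by
  have hm := multipliable_poch hq0 hq1 x hx
  have ht := hm.hasProd.tendsto_prod_nat
  have ht2 : Tendsto (fun n => ‖(∏ i ∈ Finset.range n, (1 - x * (q:ℂ)^i)) - 1‖)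
      atTop (nhds ‖poch q x - 1‖) := ((ht.sub_const 1).norm)
  refine le_of_tendsto ht2 (Eventually.of_forall fun n => ?_)
  refine (finprod_bound (fun i => x * (q:ℂ)^i) _).trans ?_
  have h1 : (∑ i ∈ Finset.range n, ‖x * (q:ℂ)^i‖) ≤ ‖x‖ / (1 - q) := by
    have he : ∀ i, ‖x * (q:ℂ)^i‖ = ‖x‖ * q ^ i := by
      intro i
      rw [norm_mul, norm_pow, Complex.norm_real, Real.norm_of_nonneg hq0]
    simp_rw [he, ← Finset.mul_sum]
    rw [div_eq_mul_inv]
    apply mul_le_mul_of_nonneg_left _ (norm_nonneg x)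
    rw [← tsum_geometric_of_lt_one hq0 hq1]
    exact Summable.sum_le_tsum _ (fun i _ => pow_nonneg hq0 i) (summable_geometric_of_lt_one hq0 hq1)
  have := (prod_le_exp (fun i => x * (q:ℂ)^i) (Finset.range n)).trans
    (Real.exp_le_exp.2 h1)
  linarith

lemma poch_bound (hq0 : 0 < q) (hq1 : q < 1) (y : ℂ)
    (hy : ∀ n : ℕ, 1 - y * (q : ℂ) ^ n ≠ 0) :
    ∃ C : ℝ, 0 < C ∧ ∀ k : ℕ, ‖poch q (y * (q:ℂ)^k) - 1‖ ≤ C * q ^ k := by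
  set S := ‖y‖ / (1 - q) with hS
  have hSnn : 0 ≤ S := by
    apply div_nonneg (norm_nonneg y); linarith
  refine ⟨S * Real.exp S + 1, by positivity, fun k => ?_⟩
  have hx : ∀ n : ℕ, 1 - (y * (q:ℂ)^k) * (q:ℂ)^n ≠ 0 := by
    intro n; rw [mul_assoc, ← pow_add]; exact hy (k + n)
  have h1 := norm_poch_sub_one hq0.le hq1 (y * (q:ℂ)^k) hx
  have hnorm : ‖y * (q:ℂ)^k‖ = ‖y‖ * q ^ k := by
    rw [norm_mul, norm_pow, Complex.norm_real, Real.norm_of_nonneg hq0.le]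
  rw [hnorm] at h1
  set Sk := ‖y‖ * q ^ k / (1 - q) with hSk
  have hSk0 : 0 ≤ Sk := by
    apply div_nonneg (by positivity); linarith
  have hSkS : Sk ≤ S := by
    rw [hSk, hS]
    apply div_le_div_of_nonneg_right _ (by linarith)
    nlinarith [norm_nonneg y, pow_le_one₀ hq0.le hq1.le (n := k)]
  have he : Real.exp Sk - 1 ≤ Sk * Real.exp Sk := by
    have h := Real.add_one_le_exp (-Sk)
    have h2 : Real.exp (-Sk) * Real.exp Sk = 1 := by
      rw [← Real.exp_add]; simp
    nlinarith [Real.exp_pos Sk]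
  have hfin : Sk * Real.exp Sk ≤ (S * Real.exp S + 1) * q ^ k := by
    have h3 : Real.exp Sk ≤ Real.exp S := Real.exp_le_exp.2 hSkS
    have h4 : Sk = S * q ^ k := by rw [hSk, hS]; ring
    calc Sk * Real.exp Sk = S * q ^ k * Real.exp Sk := by rw [h4]
      _ ≤ S * q ^ k * Real.exp S := by
          apply mul_le_mul_of_nonneg_left h3 (by positivity)
      _ ≤ (S * Real.exp S + 1) * q ^ k := by nlinarith [pow_nonneg hq0.le k]
  linarith

lemma poch_ne_zero (hq0 : 0 < q) (hq1 : q < 1) (y : ℂ)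
    (hy : ∀ n : ℕ, 1 - y * (q : ℂ) ^ n ≠ 0) : poch q y ≠ 0 := by
  obtain ⟨C, hC, hb⟩ := poch_bound hq0 hq1 y hy
  obtain ⟨k, hk⟩ : ∃ k : ℕ, C * q ^ k < 1 := by
    have := tendsto_pow_atTop_nhds_zero_of_lt_one hq0.le hq1
    have h2 := ((this.const_mul C).mono_right (by rw [mul_zero])).eventually_lt_const
      (show (0:ℝ) < 1 by norm_num)
    exact h2.exists
  have h1 : poch q (y * (q:ℂ)^k) ≠ 0 := by
    intro h
    have hbk := hb k
    rw [h] at hbk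
    simp only [zero_sub, norm_neg, norm_one] at hbk
    linarith
  rw [poch_shift hq0.le hq1 y hy k]
  apply mul_ne_zero _ h1
  rw [pochN]
  exact Finset.prod_ne_zero_iff.2 fun i _ => hy i

lemma factor_ne_zero (hq0 : 0 < q) (x : ℂ) (hx : ∀ m : ℤ, x ≠ (q:ℂ) ^ m)
    (j : ℤ) (n : ℕ) : 1 - (x * (q:ℂ)^j) * (q:ℂ)^n ≠ 0 := by
  have hqc : (q:ℂ) ≠ 0 := by
    simp only [ne_eq, Complex.ofReal_eq_zero]; linarith
  intro h
  rw [sub_eq_zero] at h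
  have h2 : x * (q:ℂ)^(j + (n:ℤ)) = 1 := by
    rw [zpow_add₀ hqc, zpow_natCast, ← mul_assoc, ← h]
  apply hx (-(j + n))
  rw [zpow_neg]
  exact eq_inv_of_mul_eq_one_left h2

lemma poch_neg_pow (hq0 : 0 < q) (hq1 : q < 1) (x : ℂ) (hx0 : x ≠ 0)
    (hx : ∀ m : ℤ, x ≠ (q:ℂ) ^ m) (k : ℕ) :
    poch q (x * (q:ℂ) ^ (-(k:ℤ))) * (q:ℂ) ^ (∑ j ∈ Finset.range k, (j+1))
      = (-x) ^ k * pochN q ((q:ℂ)/x) k * poch q x := by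
  have hqc : (q:ℂ) ≠ 0 := by
    simp only [ne_eq, Complex.ofReal_eq_zero]; linarith
  induction k with
  | zero => simp [pochN]
  | succ k ih =>
    have hfac : ∀ n : ℕ, 1 - (x * (q:ℂ)^(-((k:ℤ)+1))) * (q:ℂ)^n ≠ 0 :=
      fun n => factor_ne_zero hq0 x hx _ n
    have step := poch_shift hq0.le hq1 (x * (q:ℂ)^(-((k:ℤ)+1))) hfac 1
    have hw : x * (q:ℂ)^(-((k:ℤ)+1)) * (q:ℂ)^(1:ℕ) = x * (q:ℂ)^(-(k:ℤ)) := by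
      rw [mul_assoc, pow_one, ← zpow_add_one₀ hqc]
      norm_num
    have hcast : (-(↑(k+1)):ℤ) = -((k:ℤ)+1) := by push_cast; ring
    rw [hcast, step, hw]
    have hpn1 : pochN q (x * (q:ℂ)^(-((k:ℤ)+1))) 1 = 1 - x * (q:ℂ)^(-((k:ℤ)+1)) := by
      simp [pochN]
    rw [hpn1, Finset.sum_range_succ, pow_add]
    have key : (1 - x * (q:ℂ)^(-((k:ℤ)+1))) * (q:ℂ)^(k+1+1-1)
        = (-x) * (1 - ((q:ℂ)/x) * (q:ℂ)^k) := by
      rw [zpow_neg, zpow_add₀ hqc, zpow_natCast, zpow_one]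
      rw [show k+1+1-1 = k+1 by omega, pow_succ]
      field_simp
      ring
    calc (1 - x * (q:ℂ)^(-((k:ℤ)+1))) * poch q (x * (q:ℂ)^(-(k:ℤ)))
          * ((q:ℂ)^(∑ j ∈ Finset.range k, (j+1)) * (q:ℂ)^(k+1))
        = ((1 - x * (q:ℂ)^(-((k:ℤ)+1))) * (q:ℂ)^(k+1+1-1))
          * (poch q (x * (q:ℂ)^(-(k:ℤ))) * (q:ℂ)^(∑ j ∈ Finset.range k, (j+1))) := by
          norm_num; ring
      _ = ((-x) * (1 - ((q:ℂ)/x) * (q:ℂ)^k)) * ((-x) ^ k * pochN q ((q:ℂ)/x) k * poch q x) := by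
          rw [key, ih]
      _ = (-x) ^ (k+1) * pochN q ((q:ℂ)/x) (k+1) * poch q x := by
          rw [pochN, pochN, Finset.prod_range_succ, pow_succ]
          ring

lemma yfac (hq0 : 0 < q) (w : ℂ) (hw : ∀ m : ℤ, w ≠ (q:ℂ)^m) :
    ∀ n : ℕ, 1 - ((q:ℂ)/w) * (q:ℂ)^n ≠ 0 := by
  have hqc : (q:ℂ) ≠ 0 := by simp only [ne_eq, Complex.ofReal_eq_zero]; linarith
  by_cases hw0 : w = 0
  · simp [hw0]
  intro n h
  rw [sub_eq_zero] at h
  apply hw ((n:ℤ)+1)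
  have : w = (q:ℂ) * (q:ℂ)^n := by
    field_simp at h
    linear_combination h
  rw [this, zpow_add₀ hqc, zpow_natCast, zpow_one]; ring

lemma fac0 (hq0 : 0 < q) (x : ℂ) (hx : ∀ m : ℤ, x ≠ (q:ℂ)^m) :
    ∀ n : ℕ, 1 - x * (q:ℂ)^n ≠ 0 := by
  intro n h
  rw [sub_eq_zero] at h
  apply hx (-(n:ℤ))
  rw [zpow_neg, zpow_natCast]
  exact eq_inv_of_mul_eq_one_left h.symm

lemma alg {K : Type*} [Field K] (oneq xc z' Na Nb Nc Nd Pa Pb Pc Pd Ea Eb Ec Ed T S α β γ δ Qk : K)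
    (hT : T ≠ 0) (hQk : Qk ≠ 0) (hγ : γ ≠ 0) (hδ : δ ≠ 0)
    (hPc : Pc ≠ 0) (hPd : Pd ≠ 0) (hNc : Nc ≠ 0) (hNd : Nd ≠ 0)
    (hEc : Ec ≠ 0) (hEd : Ed ≠ 0) (hα : α ≠ 0) (hβ : β ≠ 0)
    (hx : xc * Qk = z') (hrel : S * α * β = γ * δ * Qk) :
    oneq * S * xc * (((α * Na * Pa / T) * (β * Nb * Pb / T)) /
        ((γ * Nc * Pc / T) * (δ * Nd * Pd / T))) * (Ea * Eb)
      = z' * oneq * ((Pa * (Na * Ea)) * (Pb * (Nb * Eb))) /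
          ((Pc * (Nc * Ec)) * (Pd * (Nd * Ed))) * (Ec * Ed) := by
  have hS : S = γ * δ * Qk / (α * β) := by
    rw [eq_div_iff (mul_ne_zero hα hβ)]; linear_combination hrel
  subst hS hx
  calc oneq * (γ * δ * Qk / (α * β)) * xc * (((α * Na * Pa / T) * (β * Nb * Pb / T)) /
        ((γ * Nc * Pc / T) * (δ * Nd * Pd / T))) * (Ea * Eb)
      = (oneq * (γ * δ * Qk / (α * β)) * xc * (((α * Na * Pa / T) * (β * Nb * Pb / T)) /
          ((γ * Nc * Pc / T) * (δ * Nd * Pd / T))) * (Ea * Eb)) *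
          ((Ec * Ec⁻¹) * (Ed * Ed⁻¹)) := by
        rw [mul_inv_cancel₀ hEc, mul_inv_cancel₀ hEd]; ring
    _ = ((xc * Qk) * oneq * ((Pa * (Na * Ea)) * (Pb * (Nb * Eb))) /
          ((Pc * (Nc * Ec)) * (Pd * (Nd * Ed))) * (Ec * Ed)) *
          ((T * T⁻¹) * (T * T⁻¹) * (γ * γ⁻¹) * (δ * δ⁻¹) * (α * α⁻¹) * (β * β⁻¹)) := by
        rw [div_eq_mul_inv, div_eq_mul_inv, div_eq_mul_inv, div_eq_mul_inv, div_eq_mul_inv,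
          div_eq_mul_inv, div_eq_mul_inv]
        rw [mul_inv, mul_inv, mul_inv, mul_inv, mul_inv, mul_inv, mul_inv, mul_inv,
          mul_inv, mul_inv, inv_inv]
        ring
    _ = (xc * Qk) * oneq * ((Pa * (Na * Ea)) * (Pb * (Nb * Eb))) /
          ((Pc * (Nc * Ec)) * (Pd * (Nd * Ed))) * (Ec * Ed) := by
        rw [mul_inv_cancel₀ hT, mul_inv_cancel₀ hγ, mul_inv_cancel₀ hδ,
          mul_inv_cancel₀ hα, mul_inv_cancel₀ hβ]
        ring

lemma key_identity (hq0 : 0 < q) (hq1 : q < 1)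
    (a b c d : ℂ) (z : ℝ) (ha0 : a ≠ 0) (hb0 : b ≠ 0) (hc0 : c ≠ 0) (hd0 : d ≠ 0)
    (hz : (z:ℂ) ≠ 0)
    (ha : ∀ m : ℤ, a * z ≠ (q:ℂ)^m) (hb : ∀ m : ℤ, b * z ≠ (q:ℂ)^m)
    (hc : ∀ m : ℤ, c * z ≠ (q:ℂ)^m) (hd : ∀ m : ℤ, d * z ≠ (q:ℂ)^m)
    (hs2 : sP q a b c d ^ 2 = c * d * (q:ℂ) / (a * b)) (k : ℕ) :
    (1 - (q:ℂ)) * sP q a b c d ^ (2*k) * ((z * q^(-(k:ℤ)) : ℝ) : ℂ) *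
        w q a b c d (z * q^(-(k:ℤ)))
      * (poch q ((q:ℂ)/(a*z) * (q:ℂ)^k) * poch q ((q:ℂ)/(b*z) * (q:ℂ)^k))
    = Kz q a b c d z * (poch q ((q:ℂ)/(c*z) * (q:ℂ)^k) * poch q ((q:ℂ)/(d*z) * (q:ℂ)^k)) := by
  have hqc : (q:ℂ) ≠ 0 := by simp only [ne_eq, Complex.ofReal_eq_zero]; linarith
  have hxc : ((z * q^(-(k:ℤ)) : ℝ) : ℂ) = (z:ℂ) * (q:ℂ)^(-(k:ℤ)) := by
    push_cast; ring
  have hqT : (q:ℂ) ^ (∑ j ∈ Finset.range k, (j+1)) ≠ 0 := pow_ne_zero _ hqc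
  have hA : ∀ (α : ℂ), α ≠ 0 → (∀ m : ℤ, α * z ≠ (q:ℂ)^m) →
      poch q (α * (z:ℂ) * (q:ℂ)^(-(k:ℤ)))
        = (-(α * (z:ℂ)))^k * pochN q ((q:ℂ)/(α*(z:ℂ))) k * poch q (α*(z:ℂ))
          / (q:ℂ) ^ (∑ j ∈ Finset.range k, (j+1)) := by
    intro α hα0 hα
    rw [eq_div_iff hqT]
    exact poch_neg_pow hq0 hq1 (α * z) (mul_ne_zero hα0 hz) hα k
  have hS : ∀ (α : ℂ), (∀ m : ℤ, α * z ≠ (q:ℂ)^m) →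
      poch q ((q:ℂ)/(α*(z:ℂ)))
        = pochN q ((q:ℂ)/(α*(z:ℂ))) k * poch q ((q:ℂ)/(α*(z:ℂ)) * (q:ℂ)^k) :=
    fun α hα => poch_shift hq0.le hq1 _ (yfac hq0 _ hα) k
  have hNE : ∀ (α : ℂ), (∀ m : ℤ, α * z ≠ (q:ℂ)^m) →
      pochN q ((q:ℂ)/(α*(z:ℂ))) k ≠ 0 ∧ poch q ((q:ℂ)/(α*(z:ℂ)) * (q:ℂ)^k) ≠ 0
        ∧ poch q (α*(z:ℂ)) ≠ 0 := by
    intro α hα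
    refine ⟨Finset.prod_ne_zero_iff.2 fun i _ => yfac hq0 _ hα i,
      poch_ne_zero hq0 hq1 _ (fun n => ?_), poch_ne_zero hq0 hq1 _ (fac0 hq0 _ hα)⟩
    rw [mul_assoc, ← pow_add]
    exact yfac hq0 _ hα (k + n)
  obtain ⟨hNa, hEa, hPa⟩ := hNE a ha
  obtain ⟨hNb, hEb, hPb⟩ := hNE b hb
  obtain ⟨hNc, hEc, hPc⟩ := hNE c hc
  obtain ⟨hNd, hEd, hPd⟩ := hNE d hd
  rw [w, Kz, theta, theta, theta, theta, hxc]
  rw [show a * ((z:ℂ) * (q:ℂ)^(-(k:ℤ))) = a * (z:ℂ) * (q:ℂ)^(-(k:ℤ)) by ring,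
      show b * ((z:ℂ) * (q:ℂ)^(-(k:ℤ))) = b * (z:ℂ) * (q:ℂ)^(-(k:ℤ)) by ring,
      show c * ((z:ℂ) * (q:ℂ)^(-(k:ℤ))) = c * (z:ℂ) * (q:ℂ)^(-(k:ℤ)) by ring,
      show d * ((z:ℂ) * (q:ℂ)^(-(k:ℤ))) = d * (z:ℂ) * (q:ℂ)^(-(k:ℤ)) by ring]
  rw [hA a ha0 ha, hA b hb0 hb, hA c hc0 hc, hA d hd0 hd,
      hS a ha, hS b hb, hS c hc, hS d hd]
  have hrel : sP q a b c d ^ (2*k) * (-(a*(z:ℂ)))^k * (-(b*(z:ℂ)))^k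
      = (-(c*(z:ℂ)))^k * (-(d*(z:ℂ)))^k * ((q:ℂ))^k := by
    rw [pow_mul, hs2, ← mul_pow, ← mul_pow, ← mul_pow, ← mul_pow]
    congr 1
    field_simp
  have hx : ((z:ℂ) * (q:ℂ)^(-(k:ℤ))) * (q:ℂ)^k = (z:ℂ) := by
    rw [mul_assoc, ← zpow_natCast (q:ℂ) k, ← zpow_add₀ hqc]
    simp
  exact alg (1 - (q:ℂ)) ((z:ℂ) * (q:ℂ)^(-(k:ℤ))) (z:ℂ)
    (pochN q ((q:ℂ)/(a*(z:ℂ))) k) (pochN q ((q:ℂ)/(b*(z:ℂ))) k)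
    (pochN q ((q:ℂ)/(c*(z:ℂ))) k) (pochN q ((q:ℂ)/(d*(z:ℂ))) k)
    (poch q (a*(z:ℂ))) (poch q (b*(z:ℂ))) (poch q (c*(z:ℂ))) (poch q (d*(z:ℂ)))
    (poch q ((q:ℂ)/(a*(z:ℂ)) * (q:ℂ)^k)) (poch q ((q:ℂ)/(b*(z:ℂ)) * (q:ℂ)^k))
    (poch q ((q:ℂ)/(c*(z:ℂ)) * (q:ℂ)^k)) (poch q ((q:ℂ)/(d*(z:ℂ)) * (q:ℂ)^k))
    ((q:ℂ) ^ (∑ j ∈ Finset.range k, (j+1))) (sP q a b c d ^ (2*k))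
    ((-(a*(z:ℂ)))^k) ((-(b*(z:ℂ)))^k) ((-(c*(z:ℂ)))^k) ((-(d*(z:ℂ)))^k) ((q:ℂ)^k)
    hqT (pow_ne_zero _ hqc)
    (pow_ne_zero _ (neg_ne_zero.2 (mul_ne_zero hc0 hz)))
    (pow_ne_zero _ (neg_ne_zero.2 (mul_ne_zero hd0 hz)))
    hPc hPd hNc hNd hEc hEd
    (pow_ne_zero _ (neg_ne_zero.2 (mul_ne_zero ha0 hz)))
    (pow_ne_zero _ (neg_ne_zero.2 (mul_ne_zero hb0 hz)))
    hx hrel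

lemma alg2 {K : Type*} [Field K] (oneq S2 s xc A B W : K) (hs : s ≠ 0) (hxc : xc ≠ 0) :
    (S2 / s) * (oneq^2 * (s * A * B) * xc^2 * W) / xc = oneq * (A * B) * (oneq * S2 * xc * W) := by
  calc (S2 / s) * (oneq^2 * (s * A * B) * xc^2 * W) / xc
      = oneq * (A * B) * (oneq * S2 * xc * W) * ((s⁻¹ * s) * (xc⁻¹ * xc)) := by
        rw [div_eq_mul_inv, div_eq_mul_inv]; ring
    _ = oneq * (A * B) * (oneq * S2 * xc * W) := by
        rw [inv_mul_cancel₀ hs, inv_mul_cancel₀ hxc]; ring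

lemma key_identity2 (hq0 : 0 < q) (hq1 : q < 1) (a b c d : ℂ) (z : ℝ)
    (hc0 : c ≠ 0) (hd0 : d ≠ 0) (hz : (z:ℂ) ≠ 0) (hs0 : sP q a b c d ≠ 0) (k : ℕ) :
    sP q a b c d ^ (2*(k:ℤ)-1) * u q a b c d (z * q^(-(k:ℤ))) / ((z * q^(-(k:ℤ)) : ℝ) : ℂ)
      = (1 - (q:ℂ)) * ((1 - (q:ℂ)^k/(c*(z:ℂ))) * (1 - (q:ℂ)^k/(d*(z:ℂ)))) *
        ((1 - (q:ℂ)) * sP q a b c d ^ (2*k) * ((z * q^(-(k:ℤ)) : ℝ) : ℂ) *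
          w q a b c d (z * q^(-(k:ℤ)))) := by
  have hqc : (q:ℂ) ≠ 0 := by simp only [ne_eq, Complex.ofReal_eq_zero]; linarith
  have hxc : ((z * q^(-(k:ℤ)) : ℝ) : ℂ) = (z:ℂ) * (q:ℂ)^(-(k:ℤ)) := by push_cast; ring
  have hzs : sP q a b c d ^ (2*(k:ℤ)-1) = sP q a b c d ^ (2*k) / sP q a b c d := by
    rw [zpow_sub₀ hs0, zpow_one, show (2*(k:ℤ)) = ((2*k : ℕ) : ℤ) by push_cast; ring,
      zpow_natCast]
  rw [u, Bcoef, hzs, hxc]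
  rw [show (q:ℂ)^(-(k:ℤ)) = ((q:ℂ)^k)⁻¹ by rw [zpow_neg, zpow_natCast]]
  have hqk : ((q:ℂ)^k) ≠ 0 := pow_ne_zero _ hqc
  have hxc0 : (z:ℂ) * ((q:ℂ)^k)⁻¹ ≠ 0 := mul_ne_zero hz (inv_ne_zero hqk)
  have eA : ∀ e : ℂ, e ≠ 0 → (q:ℂ)^k / (e * (z:ℂ)) = 1 / (e * ((z:ℂ) * ((q:ℂ)^k)⁻¹)) := by
    intro e he
    rw [div_eq_div_iff (mul_ne_zero he hz) (mul_ne_zero he hxc0)]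
    linear_combination e * (z:ℂ) * (mul_inv_cancel₀ hqk)
  rw [eA c hc0, eA d hd0]
  exact alg2 (1 - (q:ℂ)) (sP q a b c d ^ (2*k)) (sP q a b c d) ((z:ℂ) * ((q:ℂ)^k)⁻¹)
    (1 - 1/(c * ((z:ℂ) * ((q:ℂ)^k)⁻¹))) (1 - 1/(d * ((z:ℂ) * ((q:ℂ)^k)⁻¹)))
    (w q a b c d (z * q^(-(k:ℤ)))) hs0 hxc0

lemma final_bound1 {Kz' Wk Ea Eb Ec Ed : ℂ} {C qk : ℝ}
    (hC : 0 < C) (hqk : 0 < qk) (hCk : C * qk ≤ 1/2)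
    (hA : ‖Ea - 1‖ ≤ C*qk) (hB : ‖Eb - 1‖ ≤ C*qk) (hCc : ‖Ec - 1‖ ≤ C*qk)
    (hD : ‖Ed - 1‖ ≤ C*qk) (hEa0 : Ea ≠ 0) (hEb0 : Eb ≠ 0)
    (key : Wk * (Ea * Eb) = Kz' * (Ec * Ed)) :
    ‖Wk - Kz'‖ ≤ 20*C*(‖Kz'‖+1) * qk := by
  have hnorm : ∀ E : ℂ, ‖E - 1‖ ≤ C*qk → ‖E‖ ≤ 3/2 ∧ 1/2 ≤ ‖E‖ := by
    intro E hE
    have h1 : ‖E - 1‖ ≤ 1/2 := le_trans hE hCk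
    have h2 : ‖E‖ ≤ 3/2 := by
      have h := norm_add_le (E - 1) 1
      rw [show (E - 1) + 1 = E by ring] at h
      simp only [norm_one] at h
      linarith
    refine ⟨h2, ?_⟩
    have h3 := norm_add_le (1 - E) E
    rw [show (1 - E) + E = 1 by ring] at h3
    rw [norm_sub_rev] at h3
    simp only [norm_one] at h3
    linarith
  obtain ⟨hEa2, hEa1⟩ := hnorm Ea hA
  obtain ⟨hEb2, hEb1⟩ := hnorm Eb hB
  obtain ⟨hEc2, -⟩ := hnorm Ec hCc
  obtain ⟨hEd2, -⟩ := hnorm Ed hD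
  have hmul : ∀ E F : ℂ, ‖E - 1‖ ≤ C*qk → ‖F - 1‖ ≤ C*qk → ‖F‖ ≤ 3/2 →
      ‖E*F - 1‖ ≤ (5/2)*(C*qk) := by
    intro E F hE hF hFn
    rw [show E*F - 1 = (E - 1)*F + (F - 1) by ring]
    refine (norm_add_le _ _).trans ?_
    rw [norm_mul]
    nlinarith [norm_nonneg (E-1), norm_nonneg F]
  have hnum : ‖Ec*Ed - Ea*Eb‖ ≤ 5*(C*qk) := by
    rw [show Ec*Ed - Ea*Eb = (Ec*Ed - 1) - (Ea*Eb - 1) by ring]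
    refine (norm_sub_le _ _).trans ?_
    linarith [hmul Ec Ed hCc hD hEd2, hmul Ea Eb hA hB hEb2]
  have hden : 1/4 ≤ ‖Ea*Eb‖ := by rw [norm_mul]; nlinarith
  have hdiff : Wk - Kz' = (Kz' * (Ec*Ed) - Kz' * (Ea*Eb))/(Ea*Eb) := by
    rw [sub_div, mul_div_cancel_right₀ _ (mul_ne_zero hEa0 hEb0)]
    rw [← key, mul_div_cancel_right₀ _ (mul_ne_zero hEa0 hEb0)]
  rw [hdiff, norm_div]
  have hden0 : (0:ℝ) < ‖Ea*Eb‖ := lt_of_lt_of_le (by norm_num) hden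
  rw [div_le_iff₀ hden0]
  rw [show Kz' * (Ec*Ed) - Kz'*(Ea*Eb) = Kz' * (Ec*Ed - Ea*Eb) by ring, norm_mul]
  have h7 : ‖Kz'‖ * ‖Ec*Ed - Ea*Eb‖ ≤ ‖Kz'‖ * (5*(C*qk)) :=
    mul_le_mul_of_nonneg_left hnum (norm_nonneg _)
  have h6 : 20*C*(‖Kz'‖+1)*qk*(1/4) ≤ 20*C*(‖Kz'‖+1)*qk*‖Ea*Eb‖ := by
    apply mul_le_mul_of_nonneg_left hden (by positivity)
  nlinarith [norm_nonneg Kz', mul_pos hC hqk]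

lemma final_bound2 {K1 W A B oneq : ℂ} {M1 C3 qk : ℝ}
    (hW : ‖W - K1‖ ≤ M1*qk) (hAB : ‖A*B - 1‖ ≤ C3*qk) (hqk : 0 < qk) (hqk1 : qk ≤ 1)
    (hone : ‖oneq‖ ≤ 1) (hM1 : 0 < M1) (hC3 : 0 < C3) :
    ‖oneq*(A*B)*W - oneq*K1‖ ≤ (M1 + C3*(‖K1‖+M1)) * qk := by
  rw [show oneq*(A*B)*W - oneq*K1 = oneq * ((A*B - 1)*W + (W - K1)) by ring, norm_mul]
  have hWn : ‖W‖ ≤ ‖K1‖ + M1 := by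
    have h := norm_add_le K1 (W - K1)
    rw [show K1 + (W - K1) = W by ring] at h
    nlinarith
  have h2 : ‖(A*B-1)*W + (W - K1)‖ ≤ C3*qk*(‖K1‖+M1) + M1*qk := by
    refine (norm_add_le _ _).trans ?_
    rw [norm_mul]
    have := mul_le_mul hAB hWn (norm_nonneg W) (by positivity)
    linarith
  have h3 : ‖oneq‖ * ‖(A*B-1)*W + (W-K1)‖ ≤ 1 * (C3*qk*(‖K1‖+M1) + M1*qk) :=
    mul_le_mul hone h2 (norm_nonneg _) (by norm_num)
  nlinarith [norm_nonneg K1]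

end Helpers

set_option maxHeartbeats 2000000 in
theorem statement1_aux (q zm zp : ℝ) (a b c d : ℂ)
    (hq0 : 0 < q) (hq1 : q < 1) (hzm : zm < 0) (hzp : 0 < zp)
    (hP : memP q zm zp a b c d) (z : ℝ) (hz : z = zm ∨ z = zp) :
    ∃ M : ℝ, 0 < M ∧ ∃ N : ℕ, ∀ k : ℕ, N ≤ k →
      ‖(1 - (q : ℂ)) * sP q a b c d ^ (2 * k) * ((z * q ^ (-(k : ℤ)) : ℝ) : ℂ) *
            w q a b c d (z * q ^ (-(k : ℤ))) - Kz q a b c d z‖ ≤ M * q ^ k ∧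
      ‖sP q a b c d ^ (2 * (k : ℤ) - 1) * u q a b c d (z * q ^ (-(k : ℤ))) /
            ((z * q ^ (-(k : ℤ)) : ℝ) : ℂ) - (1 - (q : ℂ)) * Kz q a b c d z‖ ≤ M * q ^ k := by
  obtain ⟨ha0, hb0, hc0, hd0, -, hset, -, -⟩ := hP
  have hqc : (q:ℂ) ≠ 0 := by simp only [ne_eq, Complex.ofReal_eq_zero]; linarith
  have hz0 : z ≠ 0 := by rcases hz with h|h <;> subst h
                         · exact ne_of_lt hzm
                         · exact ne_of_gt hzp
  have hzc : (z:ℂ) ≠ 0 := Complex.ofReal_ne_zero.2 hz0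
  have hnp : ∀ α ∈ ({a, b, c, d} : Set ℂ), ∀ m : ℤ, α * (z:ℂ) ≠ (q:ℂ)^m := by
    intro α hα m h
    have h2 : α = ((z:ℂ))⁻¹ * (q:ℂ)^m := by
      rw [← h]
      field_simp
    rcases hz with hzz | hzz
    · exact (hset α hα m).2 (by rw [h2, hzz])
    · exact (hset α hα m).1 (by rw [h2, hzz])
  have hna : ∀ m : ℤ, a * (z:ℂ) ≠ (q:ℂ)^m := hnp a (by simp)
  have hnb : ∀ m : ℤ, b * (z:ℂ) ≠ (q:ℂ)^m := hnp b (by simp)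
  have hnc : ∀ m : ℤ, c * (z:ℂ) ≠ (q:ℂ)^m := hnp c (by simp)
  have hnd : ∀ m : ℤ, d * (z:ℂ) ≠ (q:ℂ)^m := hnp d (by simp)
  have hbase : c * d * (q:ℂ) / (a * b) ≠ 0 :=
    div_ne_zero (mul_ne_zero (mul_ne_zero hc0 hd0) hqc) (mul_ne_zero ha0 hb0)
  have hs0 : sP q a b c d ≠ 0 := by
    rw [sP]
    intro h
    rw [Complex.cpow_eq_zero_iff] at h
    exact hbase h.1
  have hs2 : sP q a b c d ^ 2 = c * d * (q:ℂ)/(a*b) := by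
    rw [sP, sq, ← Complex.cpow_add _ _ hbase, show (1:ℂ)/2 + 1/2 = 1 by norm_num,
      Complex.cpow_one]
  -- constants
  obtain ⟨Ca, hCa0, hCa⟩ := poch_bound hq0 hq1 ((q:ℂ)/(a*(z:ℂ))) (yfac hq0 _ hna)
  obtain ⟨Cb, hCb0, hCb⟩ := poch_bound hq0 hq1 ((q:ℂ)/(b*(z:ℂ))) (yfac hq0 _ hnb)
  obtain ⟨Cc, hCc0, hCc⟩ := poch_bound hq0 hq1 ((q:ℂ)/(c*(z:ℂ))) (yfac hq0 _ hnc)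
  obtain ⟨Cd, hCd0, hCd⟩ := poch_bound hq0 hq1 ((q:ℂ)/(d*(z:ℂ))) (yfac hq0 _ hnd)
  set C : ℝ := Ca + Cb + Cc + Cd with hCdef
  have hC0 : 0 < C := by positivity
  obtain ⟨N, hN⟩ : ∃ N : ℕ, C * q ^ N ≤ 1/2 := by
    have ht := tendsto_pow_atTop_nhds_zero_of_lt_one hq0.le hq1
    have h2 := ((ht.const_mul C).mono_right (by rw [mul_zero])).eventually_le_const
      (show (0:ℝ) < 1/2 by norm_num)
    exact h2.exists
  have hKn0 : (0:ℝ) ≤ ‖Kz q a b c d z‖ := norm_nonneg _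
  set M1 : ℝ := 20*C*(‖Kz q a b c d z‖+1) with hM1
  have hM10 : 0 < M1 := by positivity
  have hncz : 0 < ‖c*(z:ℂ)‖ := norm_pos_iff.2 (mul_ne_zero hc0 hzc)
  have hndz : 0 < ‖d*(z:ℂ)‖ := norm_pos_iff.2 (mul_ne_zero hd0 hzc)
  set C3 : ℝ := ‖c*(z:ℂ)‖⁻¹ + ‖d*(z:ℂ)‖⁻¹ + (‖c*(z:ℂ)‖*‖d*(z:ℂ)‖)⁻¹ with hC3def
  have hC30 : 0 < C3 := by positivity
  refine ⟨M1 + (M1 + C3*(‖Kz q a b c d z‖+M1)) + 1, by positivity, N, fun k hk => ?_⟩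
  have hqk0 : (0:ℝ) < q^k := pow_pos hq0 k
  have hqk1 : q^k ≤ 1 := pow_le_one₀ hq0.le hq1.le
  have hCk : C * q^k ≤ 1/2 := by
    refine le_trans ?_ hN
    exact mul_le_mul_of_nonneg_left (pow_le_pow_of_le_one hq0.le hq1.le hk) hC0.le
  have hqkn : ‖(q:ℂ)^k‖ = q^k := by
    rw [norm_pow, Complex.norm_real, Real.norm_of_nonneg hq0.le]
  -- E bounds
  have hbEa : ‖poch q ((q:ℂ)/(a*(z:ℂ)) * (q:ℂ)^k) - 1‖ ≤ C * q^k :=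
    le_trans (hCa k) (by nlinarith)
  have hbEb : ‖poch q ((q:ℂ)/(b*(z:ℂ)) * (q:ℂ)^k) - 1‖ ≤ C * q^k :=
    le_trans (hCb k) (by nlinarith)
  have hbEc : ‖poch q ((q:ℂ)/(c*(z:ℂ)) * (q:ℂ)^k) - 1‖ ≤ C * q^k :=
    le_trans (hCc k) (by nlinarith)
  have hbEd : ‖poch q ((q:ℂ)/(d*(z:ℂ)) * (q:ℂ)^k) - 1‖ ≤ C * q^k :=
    le_trans (hCd k) (by nlinarith)
  have hE0 : ∀ (α : ℂ), (∀ m : ℤ, α * (z:ℂ) ≠ (q:ℂ)^m) →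
      poch q ((q:ℂ)/(α*(z:ℂ)) * (q:ℂ)^k) ≠ 0 := by
    intro α hα
    refine poch_ne_zero hq0 hq1 _ (fun n => ?_)
    rw [mul_assoc, ← pow_add]
    exact yfac hq0 _ hα (k + n)
  have key := key_identity hq0 hq1 a b c d z ha0 hb0 hc0 hd0 hzc hna hnb hnc hnd hs2 k
  have goal1 : ‖(1 - (q:ℂ)) * sP q a b c d ^ (2 * k) * ((z * q ^ (-(k:ℤ)) : ℝ) : ℂ) *
      w q a b c d (z * q ^ (-(k:ℤ))) - Kz q a b c d z‖ ≤ M1 * q^k := by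
    rw [hM1]
    exact final_bound1 hC0 hqk0 hCk hbEa hbEb hbEc hbEd (hE0 a hna) (hE0 b hnb) key
  constructor
  · refine goal1.trans ?_
    nlinarith [mul_nonneg hM10.le hqk0.le, hqk0.le,
      mul_nonneg (mul_nonneg hC30.le (by positivity : (0:ℝ) ≤ ‖Kz q a b c d z‖ + M1)) hqk0.le]
  -- second bound
  have id2 := key_identity2 hq0 hq1 a b c d z hc0 hd0 hzc hs0 k
  have hAB : ‖(1 - (q:ℂ)^k/(c*(z:ℂ))) * (1 - (q:ℂ)^k/(d*(z:ℂ))) - 1‖ ≤ C3 * q^k := by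
    rw [show (1 - (q:ℂ)^k/(c*(z:ℂ))) * (1 - (q:ℂ)^k/(d*(z:ℂ))) - 1
      = (-((q:ℂ)^k/(c*(z:ℂ))) - (q:ℂ)^k/(d*(z:ℂ)))
        + ((q:ℂ)^k*(q:ℂ)^k)/((c*(z:ℂ))*(d*(z:ℂ))) by ring]
    refine (norm_add_le _ _).trans ?_
    have t1 : ‖-((q:ℂ)^k/(c*(z:ℂ))) - (q:ℂ)^k/(d*(z:ℂ))‖
        ≤ q^k * ‖c*(z:ℂ)‖⁻¹ + q^k * ‖d*(z:ℂ)‖⁻¹ := by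
      refine (norm_sub_le _ _).trans ?_
      rw [norm_neg, norm_div, norm_div, hqkn, div_eq_mul_inv, div_eq_mul_inv]
    have t2 : ‖((q:ℂ)^k*(q:ℂ)^k)/((c*(z:ℂ))*(d*(z:ℂ)))‖
        ≤ q^k * (‖c*(z:ℂ)‖*‖d*(z:ℂ)‖)⁻¹ := by
      rw [norm_div, norm_mul, norm_mul, hqkn, div_eq_mul_inv]
      have : q^k * q^k ≤ q^k * 1 := by nlinarith
      have hinv : (0:ℝ) ≤ (‖c*(z:ℂ)‖*‖d*(z:ℂ)‖)⁻¹ := by positivity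
      nlinarith
    rw [hC3def]
    nlinarith
  have hone : ‖1 - (q:ℂ)‖ ≤ 1 := by
    rw [show (1:ℂ) - (q:ℂ) = ((1-q:ℝ):ℂ) by push_cast; ring, Complex.norm_real,
      Real.norm_of_nonneg (by linarith)]
    linarith
  have goal2 := final_bound2 goal1 hAB hqk0 hqk1 hone hM10 hC30
  rw [← id2] at goal2
  refine goal2.trans ?_
  nlinarith [norm_nonneg (Kz q a b c d z), mul_pos hC30 (by positivity : (0:ℝ) < ‖Kz q a b c d z‖ + M1)]



/-- asymptotic behavior of `x w(x)` and `u(x)/x` for large `|x|`. -/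
theorem statement1 (q zm zp : ℝ) (a b c d : ℂ)
    (hq0 : 0 < q) (hq1 : q < 1) (hzm : zm < 0) (hzp : 0 < zp)
    (hP : memP q zm zp a b c d) (z : ℝ) (hz : z = zm ∨ z = zp) :
    ∃ M : ℝ, 0 < M ∧ ∃ N : ℕ, ∀ k : ℕ, N ≤ k →
      ‖(1 - (q : ℂ)) * sP q a b c d ^ (2 * k) * ((z * q ^ (-(k : ℤ)) : ℝ) : ℂ) *
            w q a b c d (z * q ^ (-(k : ℤ))) - Kz q a b c d z‖ ≤ M * q ^ k ∧
      ‖sP q a b c d ^ (2 * (k : ℤ) - 1) * u q a b c d (z * q ^ (-(k : ℤ))) /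
            ((z * q ^ (-(k : ℤ)) : ℝ) : ℂ) - (1 - (q : ℂ)) * Kz q a b c d z‖ ≤ M * q ^ k :=
  statement1_aux q zm zp a b c d hq0 hq1 hzm hzp hP z hz
end VVBQJ
end
end

section
/- Let (a,b,c,d) ∈ P and let f, g ∈ ℒ². Then for z ∈ {z₋, z₊}, lim_{k→∞} D(f,g)(zq^{−k}) = 0; that is, the Casorati determinant of two square-integrable functions tends to 0 at ±∞ along ℝ_q. -/
open Complex Filter

noncomputable section

namespace VVBQJ

section Statement2Aux

lemma summable_log_aux {q : ℝ} (hq0 : 0 < q) (hq1 : q < 1) (y : ℂ) :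
    Summable (fun j : ℕ => Complex.log (1 - y * (q : ℂ) ^ j)) := by
  have hgeo : Summable (fun j : ℕ => 3 / 2 * (‖y‖ * q ^ j)) :=
    ((summable_geometric_of_lt_one hq0.le hq1).mul_left _).mul_left _
  apply Summable.of_norm_bounded_eventually hgeo
  rw [Nat.cofinite_eq_atTop]
  have h0 : Tendsto (fun j : ℕ => ‖y‖ * q ^ j) atTop (nhds 0) := by
    simpa using (tendsto_pow_atTop_nhds_zero_of_norm_lt_one
      (by rwa [Real.norm_eq_abs, abs_of_pos hq0] : ‖q‖ < 1)).const_mul ‖y‖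
  filter_upwards [h0.eventually_le_const (by norm_num : (0:ℝ) < 1/2)] with j hj
  have hnorm : ‖-(y * (q : ℂ) ^ j)‖ = ‖y‖ * q ^ j := by
    rw [norm_neg, norm_mul, norm_pow, Complex.norm_real, Real.norm_eq_abs, abs_of_pos hq0]
  have h1 : (1 : ℂ) - y * (q : ℂ) ^ j = 1 + -(y * (q : ℂ) ^ j) := by ring
  rw [h1]
  calc ‖Complex.log (1 + -(y * (q:ℂ) ^ j))‖ ≤ 3/2 * ‖-(y * (q:ℂ) ^ j)‖ :=
        Complex.norm_log_one_add_half_le_self (by rw [hnorm]; exact hj)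
    _ = 3/2 * (‖y‖ * q ^ j) := by rw [hnorm]

lemma multipliable_poch_aux {q : ℝ} (hq0 : 0 < q) (hq1 : q < 1) {y : ℂ}
    (h : ∀ j : ℕ, 1 - y * (q : ℂ) ^ j ≠ 0) :
    Multipliable (fun j : ℕ => 1 - y * (q : ℂ) ^ j) :=
  Complex.multipliable_of_summable_log (summable_log_aux hq0 hq1 y)

lemma poch_ne_zero_aux {q : ℝ} (hq0 : 0 < q) (hq1 : q < 1) {y : ℂ}
    (h : ∀ j : ℕ, 1 - y * (q : ℂ) ^ j ≠ 0) : poch q y ≠ 0 := by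
  have hfe := Complex.cexp_tsum_eq_tprod (f := fun j : ℕ => 1 - y * (q : ℂ) ^ j) h
    (summable_log_aux hq0 hq1 y)
  beta_reduce at hfe
  unfold poch
  rw [← hfe]
  exact Complex.exp_ne_zero _

lemma poch_shift_aux {q : ℝ} (hq0 : 0 < q) (hq1 : q < 1) {y : ℂ}
    (h : ∀ j : ℕ, 1 - y * (q : ℂ) ^ j ≠ 0) :
    poch q y = (1 - y) * poch q ((q : ℂ) * y) := by
  have hfun : (fun j : ℕ => 1 - y * (q : ℂ) ^ (j + 1)) =
      fun j : ℕ => 1 - ((q : ℂ) * y) * (q : ℂ) ^ j := by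
    funext j; rw [pow_succ]; ring
  have hm : Multipliable (fun j : ℕ => 1 - ((q : ℂ) * y) * (q : ℂ) ^ j) := by
    apply multipliable_poch_aux hq0 hq1
    intro j
    have := h (j + 1)
    rw [pow_succ] at this
    intro hc; apply this; rw [← hc]; ring
  unfold poch
  rw [tprod_eq_zero_mul' (by rw [hfun]; exact hm)]
  congr 1
  · simp
  · rw [hfun]

lemma factor_ne_aux {q : ℝ} (hq0 : 0 < q) {z : ℝ} (hz : z ≠ 0) {α : ℂ}
    (hα : ∀ k : ℤ, α ≠ ((z : ℂ))⁻¹ * (q : ℂ) ^ k) (m : ℤ) (j : ℕ) :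
    1 - α * ((z : ℂ) * (q : ℂ) ^ m) * (q : ℂ) ^ j ≠ 0 := by
  have hqc : (q : ℂ) ≠ 0 := by exact_mod_cast hq0.ne'
  have hzc : (z : ℂ) ≠ 0 := by exact_mod_cast hz
  intro hcon
  apply hα (-m - (j : ℤ))
  have h1 : α * ((z : ℂ) * (q : ℂ) ^ (m + (j : ℤ))) = 1 := by
    rw [zpow_add₀ hqc, zpow_natCast]
    linear_combination -hcon
  have h2 : α = ((z : ℂ) * (q : ℂ) ^ (m + (j : ℤ)))⁻¹ := eq_inv_of_mul_eq_one_left h1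
  rw [h2, mul_inv, ← zpow_neg]
  congr 1
  ring

lemma cast_zq_aux {q z : ℝ} (m : ℤ) : ((z * q ^ m : ℝ) : ℂ) = (z : ℂ) * (q : ℂ) ^ m := by
  push_cast [Complex.ofReal_zpow]; ring

section WAux
variable {q z : ℝ} {a b c d : ℂ}
variable (hq0 : 0 < q) (hq1 : q < 1) (hz : z ≠ 0)
variable (hna : ∀ k : ℤ, a ≠ ((z : ℂ))⁻¹ * (q : ℂ) ^ k)
variable (hnb : ∀ k : ℤ, b ≠ ((z : ℂ))⁻¹ * (q : ℂ) ^ k)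
variable (hnc : ∀ k : ℤ, c ≠ ((z : ℂ))⁻¹ * (q : ℂ) ^ k)
variable (hnd : ∀ k : ℤ, d ≠ ((z : ℂ))⁻¹ * (q : ℂ) ^ k)

include hq0 hq1 hz in
lemma poch_param_ne_aux {α : ℂ} (hnα : ∀ k : ℤ, α ≠ ((z : ℂ))⁻¹ * (q : ℂ) ^ k) (m : ℤ) :
    poch q (α * ((z : ℂ) * (q : ℂ) ^ m)) ≠ 0 := by
  apply poch_ne_zero_aux hq0 hq1
  intro j
  exact factor_ne_aux hq0 hz hnα m j

include hq0 hq1 hz hna hnb hnc hnd in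
lemma w_ne_zero_aux (m : ℤ) : w q a b c d (z * q ^ m) ≠ 0 := by
  unfold w
  rw [cast_zq_aux]
  exact div_ne_zero
    (mul_ne_zero (poch_param_ne_aux hq0 hq1 hz hna m) (poch_param_ne_aux hq0 hq1 hz hnb m))
    (mul_ne_zero (poch_param_ne_aux hq0 hq1 hz hnc m) (poch_param_ne_aux hq0 hq1 hz hnd m))

include hq0 hq1 hz in
lemma poch_shift_param_aux {α : ℂ} (hnα : ∀ k : ℤ, α ≠ ((z : ℂ))⁻¹ * (q : ℂ) ^ k) (m : ℤ) :
    poch q (α * ((z : ℂ) * (q : ℂ) ^ m)) =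
      (1 - α * ((z : ℂ) * (q : ℂ) ^ m)) * poch q (α * ((z : ℂ) * (q : ℂ) ^ (m + 1))) := by
  have h : ∀ j : ℕ, 1 - (α * ((z : ℂ) * (q : ℂ) ^ m)) * (q : ℂ) ^ j ≠ 0 := by
    intro j
    exact factor_ne_aux hq0 hz hnα m j
  rw [poch_shift_aux hq0 hq1 h]
  congr 1
  rw [zpow_add₀ (by exact_mod_cast hq0.ne' : (q:ℂ) ≠ 0), zpow_one]
  ring

include hq0 hq1 hz hna hnb hnc hnd in
lemma w_shift_aux (m : ℤ) :
    w q a b c d (z * q ^ (m + 1)) *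
        ((1 - a * ((z:ℂ) * (q:ℂ) ^ m)) * (1 - b * ((z:ℂ) * (q:ℂ) ^ m)))
      = w q a b c d (z * q ^ m) *
        ((1 - c * ((z:ℂ) * (q:ℂ) ^ m)) * (1 - d * ((z:ℂ) * (q:ℂ) ^ m))) := by
  unfold w
  rw [cast_zq_aux, cast_zq_aux]
  rw [poch_shift_param_aux hq0 hq1 hz hna m, poch_shift_param_aux hq0 hq1 hz hnb m,
    poch_shift_param_aux hq0 hq1 hz hnc m, poch_shift_param_aux hq0 hq1 hz hnd m]
  have hfa : (1 - a * ((z:ℂ) * (q:ℂ) ^ m)) ≠ 0 := by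
    have := factor_ne_aux hq0 hz hna m 0; simpa using this
  have hfb : (1 - b * ((z:ℂ) * (q:ℂ) ^ m)) ≠ 0 := by
    have := factor_ne_aux hq0 hz hnb m 0; simpa using this
  have hfc : (1 - c * ((z:ℂ) * (q:ℂ) ^ m)) ≠ 0 := by
    have := factor_ne_aux hq0 hz hnc m 0; simpa using this
  have hfd : (1 - d * ((z:ℂ) * (q:ℂ) ^ m)) ≠ 0 := by
    have := factor_ne_aux hq0 hz hnd m 0; simpa using this
  have hpc := poch_param_ne_aux hq0 hq1 hz hnc (m+1)
  have hpd := poch_param_ne_aux hq0 hq1 hz hnd (m+1)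
  rw [div_mul_eq_mul_div, div_mul_eq_mul_div, div_eq_div_iff (mul_ne_zero hpc hpd)
    (mul_ne_zero (mul_ne_zero hfc hpc) (mul_ne_zero hfd hpd))]
  ring
end WAux

end Statement2Aux

lemma h2_arith_aux {oneq β W W' T pab pcd qr : ℝ}
    (hW : 0 < W) (hpab : 0 < pab) (hT : 0 ≤ T) (_hβ : 0 ≤ β) (_honeq : 0 ≤ oneq)
    (_hqr : 0 ≤ qr)
    (hkey : oneq ^ 2 * β ^ 2 * pab ≤ qr * pcd)
    (hWrel : W' * pab = W * pcd) :
    (oneq * β * T * W) ^ 2 ≤ (W * T) * (W' * (qr * T)) := by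
  have t0 := mul_le_mul_of_nonneg_right hkey (mul_nonneg hW.le (mul_nonneg hT hT))
  have t2 : qr * pcd * (W * T * T) = (qr * W' * T * T) * pab := by
    linear_combination (-(qr * T * T)) * hWrel
  have t1 : (oneq ^ 2 * β ^ 2) * (W * T * T) * pab ≤ (qr * W' * T * T) * pab := by
    calc (oneq ^ 2 * β ^ 2) * (W * T * T) * pab
        = oneq ^ 2 * β ^ 2 * pab * (W * (T * T)) := by ring
      _ ≤ qr * pcd * (W * (T * T)) := t0
      _ = qr * pcd * (W * T * T) := by ring
      _ = (qr * W' * T * T) * pab := t2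
  have t3 : (oneq ^ 2 * β ^ 2) * (W * T * T) ≤ qr * W' * T * T :=
    le_of_mul_le_mul_right t1 hpab
  have t4 := mul_le_mul_of_nonneg_right t3 hW.le
  calc (oneq * β * T * W) ^ 2 = ((oneq ^ 2 * β ^ 2) * (W * T * T)) * W := by ring
    _ ≤ (qr * W' * T * T) * W := t4
    _ = (W * T) * (W' * (qr * T)) := by ring

/-- the Casorati determinant of two `ℒ²`-functions vanishes at `±∞`. -/
theorem statement2 (q zm zp : ℝ) (a b c d : ℂ)
    (hq0 : 0 < q) (hq1 : q < 1) (hzm : zm < 0) (hzp : 0 < zp)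
    (hP : memP q zm zp a b c d)
    (f g : ℝ → ℂ) (hf : memL2 q zm zp a b c d f) (hg : memL2 q zm zp a b c d g)
    (z : ℝ) (hz : z = zm ∨ z = zp) :
    Tendsto (fun k : ℕ => casD q a b c d f g (z * q ^ (-(k : ℤ)))) atTop (nhds 0) := by
  obtain ⟨ha0, hb0, hc0, hd0, -, hexcl, -, -⟩ := hP
  have hz0 : z ≠ 0 := by
    rcases hz with h | h
    · rw [h]; exact ne_of_lt hzm
    · rw [h]; exact ne_of_gt hzp
  have hqc : (q : ℂ) ≠ 0 := by exact_mod_cast hq0.ne'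
  have hzc : (z : ℂ) ≠ 0 := by exact_mod_cast hz0
  have h1q : (0:ℝ) < 1 - q := by linarith
  have hexz : ∀ α ∈ ({a, b, c, d} : Set ℂ), ∀ k : ℤ, α ≠ ((z : ℂ))⁻¹ * (q : ℂ) ^ k := by
    intro α hα k
    rcases hz with h | h
    · rw [h]; exact (hexcl α hα k).2
    · rw [h]; exact (hexcl α hα k).1
  have hna : ∀ k : ℤ, a ≠ ((z : ℂ))⁻¹ * (q : ℂ) ^ k := hexz a (by simp)
  have hnb : ∀ k : ℤ, b ≠ ((z : ℂ))⁻¹ * (q : ℂ) ^ k := hexz b (by simp)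
  have hnc : ∀ k : ℤ, c ≠ ((z : ℂ))⁻¹ * (q : ℂ) ^ k := hexz c (by simp)
  have hnd : ∀ k : ℤ, d ≠ ((z : ℂ))⁻¹ * (q : ℂ) ^ k := hexz d (by simp)
  -- summability of the weighted square sequences along z
  have hsf : Summable (fun j : ℤ =>
      ‖f (z * q ^ j)‖ ^ 2 * ‖w q a b c d (z * q ^ j)‖ * |z * q ^ j|) := by
    rcases hz with h | h
    · rw [h]; exact hf.2
    · rw [h]; exact hf.1
  have hsg : Summable (fun j : ℤ =>
      ‖g (z * q ^ j)‖ ^ 2 * ‖w q a b c d (z * q ^ j)‖ * |z * q ^ j|) := by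
    rcases hz with h | h
    · rw [h]; exact hg.2
    · rw [h]; exact hg.1
  have comp0 : Tendsto (fun k : ℕ => -(k:ℤ)) atTop cofinite := by
    rw [← Nat.cofinite_eq_atTop]
    exact Function.Injective.tendsto_cofinite (fun x y hxy => by omega)
  have comp1 : Tendsto (fun k : ℕ => -(k:ℤ) + 1) atTop cofinite := by
    rw [← Nat.cofinite_eq_atTop]
    exact Function.Injective.tendsto_cofinite (fun x y hxy => by omega)
  have hAf : Tendsto (fun k : ℕ => ‖f (z * q ^ (-(k:ℤ)))‖ ^ 2 *
      ‖w q a b c d (z * q ^ (-(k:ℤ)))‖ * |z * q ^ (-(k:ℤ))|) atTop (nhds 0) :=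
    hsf.tendsto_cofinite_zero.comp comp0
  have hAf' : Tendsto (fun k : ℕ => ‖f (z * q ^ (-(k:ℤ) + 1))‖ ^ 2 *
      ‖w q a b c d (z * q ^ (-(k:ℤ) + 1))‖ * |z * q ^ (-(k:ℤ) + 1)|) atTop (nhds 0) :=
    hsf.tendsto_cofinite_zero.comp comp1
  have hAg : Tendsto (fun k : ℕ => ‖g (z * q ^ (-(k:ℤ)))‖ ^ 2 *
      ‖w q a b c d (z * q ^ (-(k:ℤ)))‖ * |z * q ^ (-(k:ℤ))|) atTop (nhds 0) :=
    hsg.tendsto_cofinite_zero.comp comp0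
  have hAg' : Tendsto (fun k : ℕ => ‖g (z * q ^ (-(k:ℤ) + 1))‖ ^ 2 *
      ‖w q a b c d (z * q ^ (-(k:ℤ) + 1))‖ * |z * q ^ (-(k:ℤ) + 1)|) atTop (nhds 0) :=
    hsg.tendsto_cofinite_zero.comp comp1
  -- facts about s
  have hcdq : c * d * (q:ℂ) / (a * b) ≠ 0 :=
    div_ne_zero (mul_ne_zero (mul_ne_zero hc0 hd0) hqc) (mul_ne_zero ha0 hb0)
  have hs2 : sP q a b c d ^ 2 = c * d * (q:ℂ) / (a * b) := by
    unfold sP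
    rw [sq, ← Complex.cpow_add _ _ hcdq]
    norm_num
  have hsnorm : ‖sP q a b c d‖ ^ 2 * (‖a‖ * ‖b‖) = q * (‖c‖ * ‖d‖) := by
    have h1 : ‖sP q a b c d‖ ^ 2 = ‖c * d * (q:ℂ)‖ / ‖a * b‖ := by
      rw [← norm_pow, hs2, norm_div]
    rw [h1, ← norm_mul, div_mul_cancel₀ _ (norm_ne_zero_iff.mpr (mul_ne_zero ha0 hb0))]
    rw [norm_mul, norm_mul, Complex.norm_real, Real.norm_eq_abs, abs_of_pos hq0]
    ring
  -- the elementary limits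
  have hqpow : Tendsto (fun k : ℕ => (q:ℂ) ^ k) atTop (nhds 0) :=
    tendsto_pow_atTop_nhds_zero_of_norm_lt_one
      (by rw [Complex.norm_real, Real.norm_eq_abs, abs_of_pos hq0]; exact hq1)
  have htende : ∀ α : ℂ, α ≠ 0 →
      Tendsto (fun k : ℕ => ‖1 - 1 / (α * ((z:ℂ) * (q:ℂ) ^ (-(k:ℤ))))‖) atTop (nhds 1) := by
    intro α hα
    have hre : ∀ k : ℕ, 1 / (α * ((z:ℂ) * (q:ℂ) ^ (-(k:ℤ)))) = (α * z)⁻¹ * (q:ℂ) ^ k := by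
      intro k
      rw [zpow_neg, zpow_natCast]
      field_simp
    simp only [hre]
    have h2 : Tendsto (fun k : ℕ => 1 - (α * z)⁻¹ * (q:ℂ) ^ k) atTop
        (nhds (1 - (α * z)⁻¹ * 0)) := tendsto_const_nhds.sub (hqpow.const_mul _)
    have h3 := h2.norm
    simpa using h3
  have hE : ∀ᶠ k : ℕ in atTop, (1-q)^2 *
      (‖1 - 1 / (a * ((z:ℂ) * (q:ℂ) ^ (-(k:ℤ))))‖ * ‖1 - 1 / (b * ((z:ℂ) * (q:ℂ) ^ (-(k:ℤ))))‖ *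
        ‖1 - 1 / (c * ((z:ℂ) * (q:ℂ) ^ (-(k:ℤ))))‖ * ‖1 - 1 / (d * ((z:ℂ) * (q:ℂ) ^ (-(k:ℤ))))‖)
      < 1 := by
    have hT := ((((htende a ha0).mul (htende b hb0)).mul (htende c hc0)).mul
      (htende d hd0)).const_mul ((1-q)^2)
    exact hT.eventually_lt_const (by nlinarith)
  -- the master pointwise bound
  have hmaster : ∀ᶠ k : ℕ in atTop,
      ‖casD q a b c d f g (z * q ^ (-(k:ℤ)))‖ ≤
        Real.sqrt (‖f (z * q ^ (-(k:ℤ)))‖ ^ 2 * ‖w q a b c d (z * q ^ (-(k:ℤ)))‖ *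
            |z * q ^ (-(k:ℤ))|) *
          Real.sqrt (‖g (z * q ^ (-(k:ℤ) + 1))‖ ^ 2 * ‖w q a b c d (z * q ^ (-(k:ℤ) + 1))‖ *
            |z * q ^ (-(k:ℤ) + 1)|) +
        Real.sqrt (‖f (z * q ^ (-(k:ℤ) + 1))‖ ^ 2 * ‖w q a b c d (z * q ^ (-(k:ℤ) + 1))‖ *
            |z * q ^ (-(k:ℤ) + 1)|) *
          Real.sqrt (‖g (z * q ^ (-(k:ℤ)))‖ ^ 2 * ‖w q a b c d (z * q ^ (-(k:ℤ)))‖ *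
            |z * q ^ (-(k:ℤ))|) := by
    filter_upwards [hE] with k hk
    set m : ℤ := -(k:ℤ) with hmdef
    have harg : q * (z * q ^ m) = z * q ^ (m + 1) := by
      rw [zpow_add₀ hq0.ne', zpow_one]; ring
    have hx0 : z * q ^ m ≠ 0 := mul_ne_zero hz0 (zpow_ne_zero _ hq0.ne')
    have hxabs : 0 < |z * q ^ m| := abs_pos.mpr hx0
    have hZ0 : (z:ℂ) * (q:ℂ) ^ m ≠ 0 := mul_ne_zero hzc (zpow_ne_zero _ hqc)
    have hW : 0 < ‖w q a b c d (z * q ^ m)‖ :=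
      norm_pos_iff.mpr (w_ne_zero_aux hq0 hq1 hz0 hna hnb hnc hnd m)
    have hW' : 0 < ‖w q a b c d (z * q ^ (m+1))‖ :=
      norm_pos_iff.mpr (w_ne_zero_aux hq0 hq1 hz0 hna hnb hnc hnd (m+1))
    have hq1c : (1:ℂ) - (q:ℂ) ≠ 0 := by
      intro hcon
      have h5 : (q:ℂ) = 1 := by linear_combination -hcon
      have : q = 1 := by exact_mod_cast h5
      linarith
    have hxc : ((z * q ^ m : ℝ) : ℂ) ≠ 0 := by exact_mod_cast hx0
    have hcd1 : casD q a b c d f g (z * q ^ m) =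
        (f (z * q ^ m) * g (z * q ^ (m+1)) - f (z * q ^ (m+1)) * g (z * q ^ m)) *
          ((1 - (q:ℂ)) * Bcoef q a b c d (z * q ^ m) * ((z * q ^ m : ℝ) : ℂ) *
            w q a b c d (z * q ^ m)) := by
      unfold casD u
      rw [harg]
      field_simp
    have hnormq : ‖(1:ℂ) - (q:ℂ)‖ = 1 - q := by
      rw [show (1:ℂ) - (q:ℂ) = ((1 - q : ℝ) : ℂ) by push_cast; ring, Complex.norm_real,
        Real.norm_eq_abs, abs_of_pos h1q]
    have h4 : ‖(1 - (q:ℂ)) * Bcoef q a b c d (z * q ^ m) * ((z * q ^ m : ℝ) : ℂ) *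
        w q a b c d (z * q ^ m)‖ =
        (1 - q) * ‖Bcoef q a b c d (z * q ^ m)‖ * |z * q ^ m| * ‖w q a b c d (z * q ^ m)‖ := by
      rw [norm_mul, norm_mul, norm_mul, hnormq, Complex.norm_real, Real.norm_eq_abs]
    have hbound1 : ‖casD q a b c d f g (z * q ^ m)‖ ≤
        (‖f (z * q ^ m)‖ * ‖g (z * q ^ (m+1))‖ + ‖f (z * q ^ (m+1))‖ * ‖g (z * q ^ m)‖) *
          ((1 - q) * ‖Bcoef q a b c d (z * q ^ m)‖ * |z * q ^ m| *
            ‖w q a b c d (z * q ^ m)‖) := by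
      rw [hcd1, norm_mul, h4]
      apply mul_le_mul_of_nonneg_right _ (by positivity)
      calc ‖f (z * q ^ m) * g (z * q ^ (m+1)) - f (z * q ^ (m+1)) * g (z * q ^ m)‖
          ≤ ‖f (z * q ^ m) * g (z * q ^ (m+1))‖ + ‖f (z * q ^ (m+1)) * g (z * q ^ m)‖ :=
            norm_sub_le _ _
        _ = ‖f (z * q ^ m)‖ * ‖g (z * q ^ (m+1))‖ + ‖f (z * q ^ (m+1))‖ * ‖g (z * q ^ m)‖ := by
            rw [norm_mul, norm_mul]
    -- nonvanishing of linear factors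
    have hfa1 : (1 - a * ((z:ℂ) * (q:ℂ) ^ m)) ≠ 0 := by
      have := factor_ne_aux hq0 hz0 hna m 0; simpa using this
    have hfb1 : (1 - b * ((z:ℂ) * (q:ℂ) ^ m)) ≠ 0 := by
      have := factor_ne_aux hq0 hz0 hnb m 0; simpa using this
    have hfc1 : (1 - c * ((z:ℂ) * (q:ℂ) ^ m)) ≠ 0 := by
      have := factor_ne_aux hq0 hz0 hnc m 0; simpa using this
    have hfd1 : (1 - d * ((z:ℂ) * (q:ℂ) ^ m)) ≠ 0 := by
      have := factor_ne_aux hq0 hz0 hnd m 0; simpa using this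
    have iab : (1 - a * ((z:ℂ) * (q:ℂ) ^ m)) * (1 - b * ((z:ℂ) * (q:ℂ) ^ m)) =
        (a * b * ((z:ℂ) * (q:ℂ) ^ m) ^ 2) *
          ((1 - 1 / (a * ((z:ℂ) * (q:ℂ) ^ m))) * (1 - 1 / (b * ((z:ℂ) * (q:ℂ) ^ m)))) := by
      field_simp
      ring
    have icd : (1 - c * ((z:ℂ) * (q:ℂ) ^ m)) * (1 - d * ((z:ℂ) * (q:ℂ) ^ m)) =
        (c * d * ((z:ℂ) * (q:ℂ) ^ m) ^ 2) *
          ((1 - 1 / (c * ((z:ℂ) * (q:ℂ) ^ m))) * (1 - 1 / (d * ((z:ℂ) * (q:ℂ) ^ m)))) := by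
      field_simp
      ring
    have iB : Bcoef q a b c d (z * q ^ m) =
        sP q a b c d * (1 - 1 / (c * ((z:ℂ) * (q:ℂ) ^ m))) *
          (1 - 1 / (d * ((z:ℂ) * (q:ℂ) ^ m))) := by
      unfold Bcoef
      rw [cast_zq_aux]
    have hkey : (1-q)^2 * ‖Bcoef q a b c d (z * q ^ m)‖ ^ 2 *
        ‖(1 - a * ((z:ℂ) * (q:ℂ) ^ m)) * (1 - b * ((z:ℂ) * (q:ℂ) ^ m))‖ ≤
        q * ‖(1 - c * ((z:ℂ) * (q:ℂ) ^ m)) * (1 - d * ((z:ℂ) * (q:ℂ) ^ m))‖ := by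
      rw [iB, iab, icd]
      simp only [norm_mul, norm_pow]
      calc (1-q)^2 * (‖sP q a b c d‖ * ‖1 - 1 / (c * ((z:ℂ) * (q:ℂ) ^ m))‖ *
              ‖1 - 1 / (d * ((z:ℂ) * (q:ℂ) ^ m))‖)^2 *
            (‖a‖ * ‖b‖ * (‖(z:ℂ)‖ * ‖(q:ℂ) ^ m‖)^2 *
              (‖1 - 1 / (a * ((z:ℂ) * (q:ℂ) ^ m))‖ * ‖1 - 1 / (b * ((z:ℂ) * (q:ℂ) ^ m))‖))
          = (‖sP q a b c d‖^2 * (‖a‖ * ‖b‖) * (‖(z:ℂ)‖ * ‖(q:ℂ) ^ m‖)^2 *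
              ‖1 - 1 / (c * ((z:ℂ) * (q:ℂ) ^ m))‖ * ‖1 - 1 / (d * ((z:ℂ) * (q:ℂ) ^ m))‖) *
            ((1-q)^2 * (‖1 - 1 / (a * ((z:ℂ) * (q:ℂ) ^ m))‖ *
              ‖1 - 1 / (b * ((z:ℂ) * (q:ℂ) ^ m))‖ * ‖1 - 1 / (c * ((z:ℂ) * (q:ℂ) ^ m))‖ *
              ‖1 - 1 / (d * ((z:ℂ) * (q:ℂ) ^ m))‖)) := by ring
        _ ≤ (‖sP q a b c d‖^2 * (‖a‖ * ‖b‖) * (‖(z:ℂ)‖ * ‖(q:ℂ) ^ m‖)^2 *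
              ‖1 - 1 / (c * ((z:ℂ) * (q:ℂ) ^ m))‖ * ‖1 - 1 / (d * ((z:ℂ) * (q:ℂ) ^ m))‖) * 1 :=
            mul_le_mul_of_nonneg_left hk.le (by positivity)
        _ = q * (‖c‖ * ‖d‖ * (‖(z:ℂ)‖ * ‖(q:ℂ) ^ m‖)^2 *
              (‖1 - 1 / (c * ((z:ℂ) * (q:ℂ) ^ m))‖ * ‖1 - 1 / (d * ((z:ℂ) * (q:ℂ) ^ m))‖)) := by
            linear_combination ((‖(z:ℂ)‖ * ‖(q:ℂ) ^ m‖)^2 * ‖1 - 1 / (c * ((z:ℂ) * (q:ℂ) ^ m))‖ *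
              ‖1 - 1 / (d * ((z:ℂ) * (q:ℂ) ^ m))‖) * hsnorm
    have hWrel : ‖w q a b c d (z * q ^ (m+1))‖ *
        ‖(1 - a * ((z:ℂ) * (q:ℂ) ^ m)) * (1 - b * ((z:ℂ) * (q:ℂ) ^ m))‖ =
        ‖w q a b c d (z * q ^ m)‖ *
        ‖(1 - c * ((z:ℂ) * (q:ℂ) ^ m)) * (1 - d * ((z:ℂ) * (q:ℂ) ^ m))‖ := by
      rw [← norm_mul, ← norm_mul, w_shift_aux hq0 hq1 hz0 hna hnb hnc hnd m]
    have hpab : 0 < ‖(1 - a * ((z:ℂ) * (q:ℂ) ^ m)) * (1 - b * ((z:ℂ) * (q:ℂ) ^ m))‖ :=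
      norm_pos_iff.mpr (mul_ne_zero hfa1 hfb1)
    have habs1 : |z * q ^ (m+1)| = q * |z * q ^ m| := by
      rw [← harg, abs_mul, abs_of_pos hq0]
    have h2 : ((1-q) * ‖Bcoef q a b c d (z * q ^ m)‖ * |z * q ^ m| *
          ‖w q a b c d (z * q ^ m)‖)^2 ≤
        (‖w q a b c d (z * q ^ m)‖ * |z * q ^ m|) *
          (‖w q a b c d (z * q ^ (m+1))‖ * |z * q ^ (m+1)|) := by
      rw [habs1]
      exact h2_arith_aux hW hpab (abs_nonneg _) (norm_nonneg _) h1q.le hq0.le hkey hWrel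
    have hstar : (1-q) * ‖Bcoef q a b c d (z * q ^ m)‖ * |z * q ^ m| *
          ‖w q a b c d (z * q ^ m)‖ ≤
        Real.sqrt (‖w q a b c d (z * q ^ m)‖ * |z * q ^ m|) *
          Real.sqrt (‖w q a b c d (z * q ^ (m+1))‖ * |z * q ^ (m+1)|) := by
      rw [← Real.sqrt_mul (by positivity)]
      calc (1-q) * ‖Bcoef q a b c d (z * q ^ m)‖ * |z * q ^ m| * ‖w q a b c d (z * q ^ m)‖
          = Real.sqrt (((1-q) * ‖Bcoef q a b c d (z * q ^ m)‖ * |z * q ^ m| *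
              ‖w q a b c d (z * q ^ m)‖)^2) := (Real.sqrt_sq (by positivity)).symm
        _ ≤ _ := Real.sqrt_le_sqrt h2
    have e1 : Real.sqrt (‖f (z * q ^ m)‖ ^ 2 * ‖w q a b c d (z * q ^ m)‖ * |z * q ^ m|) =
        ‖f (z * q ^ m)‖ * Real.sqrt (‖w q a b c d (z * q ^ m)‖ * |z * q ^ m|) := by
      rw [mul_assoc, Real.sqrt_mul (sq_nonneg _), Real.sqrt_sq (norm_nonneg _)]
    have e2 : Real.sqrt (‖g (z * q ^ (m+1))‖ ^ 2 * ‖w q a b c d (z * q ^ (m+1))‖ *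
        |z * q ^ (m+1)|) =
        ‖g (z * q ^ (m+1))‖ * Real.sqrt (‖w q a b c d (z * q ^ (m+1))‖ * |z * q ^ (m+1)|) := by
      rw [mul_assoc, Real.sqrt_mul (sq_nonneg _), Real.sqrt_sq (norm_nonneg _)]
    have e3 : Real.sqrt (‖f (z * q ^ (m+1))‖ ^ 2 * ‖w q a b c d (z * q ^ (m+1))‖ *
        |z * q ^ (m+1)|) =
        ‖f (z * q ^ (m+1))‖ * Real.sqrt (‖w q a b c d (z * q ^ (m+1))‖ * |z * q ^ (m+1)|) := by
      rw [mul_assoc, Real.sqrt_mul (sq_nonneg _), Real.sqrt_sq (norm_nonneg _)]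
    have e4 : Real.sqrt (‖g (z * q ^ m)‖ ^ 2 * ‖w q a b c d (z * q ^ m)‖ * |z * q ^ m|) =
        ‖g (z * q ^ m)‖ * Real.sqrt (‖w q a b c d (z * q ^ m)‖ * |z * q ^ m|) := by
      rw [mul_assoc, Real.sqrt_mul (sq_nonneg _), Real.sqrt_sq (norm_nonneg _)]
    rw [e1, e2, e3, e4]
    calc ‖casD q a b c d f g (z * q ^ m)‖
        ≤ (‖f (z * q ^ m)‖ * ‖g (z * q ^ (m+1))‖ + ‖f (z * q ^ (m+1))‖ * ‖g (z * q ^ m)‖) *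
          ((1 - q) * ‖Bcoef q a b c d (z * q ^ m)‖ * |z * q ^ m| *
            ‖w q a b c d (z * q ^ m)‖) := hbound1
      _ ≤ (‖f (z * q ^ m)‖ * ‖g (z * q ^ (m+1))‖ + ‖f (z * q ^ (m+1))‖ * ‖g (z * q ^ m)‖) *
          (Real.sqrt (‖w q a b c d (z * q ^ m)‖ * |z * q ^ m|) *
            Real.sqrt (‖w q a b c d (z * q ^ (m+1))‖ * |z * q ^ (m+1)|)) :=
          mul_le_mul_of_nonneg_left hstar (by positivity)
      _ = ‖f (z * q ^ m)‖ * Real.sqrt (‖w q a b c d (z * q ^ m)‖ * |z * q ^ m|) *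
            (‖g (z * q ^ (m+1))‖ *
              Real.sqrt (‖w q a b c d (z * q ^ (m+1))‖ * |z * q ^ (m+1)|)) +
          ‖f (z * q ^ (m+1))‖ *
              Real.sqrt (‖w q a b c d (z * q ^ (m+1))‖ * |z * q ^ (m+1)|) *
            (‖g (z * q ^ m)‖ * Real.sqrt (‖w q a b c d (z * q ^ m)‖ * |z * q ^ m|)) := by
          ring
  rw [tendsto_zero_iff_norm_tendsto_zero]
  apply squeeze_zero' (Eventually.of_forall fun k => norm_nonneg _) hmaster
  simpa using ((hAf.sqrt.mul hAg'.sqrt).add (hAf'.sqrt.mul hAg.sqrt))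
end VVBQJ
end
end

section
/- Let (a,b,c,d) ∈ P_gen and γ ∈ ℂ*. Then the limits lim_{k→∞} φ_γ(z₋q^k) and lim_{k→∞} φ_γ(z₊q^k) exist and are both equal to Σ_{n≥0} [(sγ;q)_n (s/γ;q)_n / ((q;q)_n (cq/a;q)_n (dq/a;q)_n)]·(−1)^n·q^{n(n−1)/2}·(bq/a)^n, and the limits lim_{k→∞} (D_q φ_γ)(z₋q^k) and lim_{k→∞} (D_q φ_γ)(z₊q^k) exist and are both equal to [b(1−sγ)(1−s/γ) / ((1−q)(1−cq/a)(1−dq/a))] · Σ_{n≥0} [(sqγ;q)_n (sq/γ;q)_n / ((q;q)_n (cq²/a;q)_n (dq²/a;q)_n)]·(−1)^n·q^{n(n−1)/2}·(bq/a)^n. (Here φ_γ(z±q^k) is defined for all k large enough that |z±q^k| < 1/|b|.) -/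
open Complex Filter

noncomputable section

namespace VVBQJ

/-- The value `φ_γ(0)`. -/
def phiZeroVal (q : ℝ) (a b c d : ℂ) (γ : ℂ) : ℂ :=
  ∑' n : ℕ,
    pochN q (sP q a b c d * γ) n * pochN q (sP q a b c d / γ) n /
      (pochN q q n * pochN q (c * q / a) n * pochN q (d * q / a) n) *
      ((-1) ^ n * (q : ℂ) ^ (n * (n - 1) / 2) * (b * q / a) ^ n)

/-- The value `φ_γ'(0)`. -/
def phiZeroDer (q : ℝ) (a b c d : ℂ) (γ : ℂ) : ℂ :=
  b * (1 - sP q a b c d * γ) * (1 - sP q a b c d / γ) /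
      ((1 - (q : ℂ)) * (1 - c * q / a) * (1 - d * q / a)) *
    ∑' n : ℕ,
      pochN q (sP q a b c d * q * γ) n * pochN q (sP q a b c d * q / γ) n /
        (pochN q q n * pochN q (c * (q : ℂ) ^ 2 / a) n * pochN q (d * (q : ℂ) ^ 2 / a) n) *
        ((-1) ^ n * (q : ℂ) ^ (n * (n - 1) / 2) * (b * q / a) ^ n)

/-! ### Auxiliary material for Statement 6 -/

lemma aux_pochN_ne_zero {q : ℝ} {x : ℂ} (h : ∀ j : ℕ, 1 - x * (q : ℂ) ^ j ≠ 0) (n : ℕ) :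
    pochN q x n ≠ 0 :=
  Finset.prod_ne_zero_iff.2 fun j _ => h j

lemma aux_pochN_succ (q : ℝ) (x : ℂ) (n : ℕ) :
    pochN q x (n + 1) = pochN q x n * (1 - x * (q : ℂ) ^ n) :=
  Finset.prod_range_succ _ _

lemma aux_pochN_shift (q : ℝ) (x : ℂ) (n : ℕ) :
    pochN q x (n + 1) = (1 - x) * pochN q ((q : ℂ) * x) n := by
  rw [pochN, Finset.prod_range_succ']
  simp only [pow_zero, mul_one]
  rw [mul_comm, pochN]
  congr 1
  refine Finset.prod_congr rfl fun j _ => ?_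
  ring

lemma aux_geom_sum_le {q : ℝ} (hq0 : 0 < q) (hq1 : q < 1) (n : ℕ) :
    ∑ j ∈ Finset.range n, q ^ j ≤ 1 / (1 - q) := by
  have h1 : (0 : ℝ) < 1 - q := by linarith
  rw [geom_sum_eq hq1.ne n]
  have h2 : (q ^ n - 1) / (q - 1) = (1 - q ^ n) / (1 - q) := by
    rw [← neg_div_neg_eq]; ring_nf
  rw [h2, div_le_div_iff₀ h1 h1]
  nlinarith [pow_nonneg hq0.le n]

lemma aux_pochN_norm_le {q : ℝ} (hq0 : 0 < q) (hq1 : q < 1) (x : ℂ) (n : ℕ) :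
    ‖pochN q x n‖ ≤ Real.exp (‖x‖ / (1 - q)) := by
  have hnq : ‖(q : ℂ)‖ = q := by rw [Complex.norm_real, Real.norm_eq_abs, abs_of_pos hq0]
  have h1 : (0 : ℝ) < 1 - q := by linarith
  rw [pochN, norm_prod]
  calc ∏ j ∈ Finset.range n, ‖1 - x * (q : ℂ) ^ j‖
      ≤ ∏ j ∈ Finset.range n, Real.exp (‖x‖ * q ^ j) := by
        refine Finset.prod_le_prod (fun j _ => norm_nonneg _) (fun j _ => ?_)
        have h2 : ‖1 - x * (q : ℂ) ^ j‖ ≤ 1 + ‖x‖ * q ^ j := by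
          calc ‖1 - x * (q : ℂ) ^ j‖ ≤ ‖(1 : ℂ)‖ + ‖x * (q : ℂ) ^ j‖ := norm_sub_le _ _
            _ = 1 + ‖x‖ * q ^ j := by rw [norm_one, norm_mul, norm_pow, hnq]
        have h3 := Real.add_one_le_exp (‖x‖ * q ^ j)
        linarith
    _ = Real.exp (∑ j ∈ Finset.range n, ‖x‖ * q ^ j) := (Real.exp_sum _ _).symm
    _ ≤ Real.exp (‖x‖ / (1 - q)) := by
        apply Real.exp_le_exp.2
        rw [← Finset.mul_sum]
        calc ‖x‖ * ∑ j ∈ Finset.range n, q ^ j ≤ ‖x‖ * (1 / (1 - q)) :=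
              mul_le_mul_of_nonneg_left (aux_geom_sum_le hq0 hq1 n) (norm_nonneg x)
          _ = ‖x‖ / (1 - q) := by ring

lemma aux_prod_one_sub_ge {u : ℕ → ℝ} (s : Finset ℕ) (h0 : ∀ j ∈ s, 0 ≤ u j)
    (h1 : ∀ j ∈ s, u j ≤ 1) :
    1 - ∑ j ∈ s, u j ≤ ∏ j ∈ s, (1 - u j) := by
  induction s using Finset.induction with
  | empty => simp
  | @insert i s his ih =>
    rw [Finset.prod_insert his, Finset.sum_insert his]
    have h0' : ∀ j ∈ s, 0 ≤ u j := fun j hj => h0 j (Finset.mem_insert_of_mem hj)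
    have h1' : ∀ j ∈ s, u j ≤ 1 := fun j hj => h1 j (Finset.mem_insert_of_mem hj)
    have hih := ih h0' h1'
    have hprod : (0 : ℝ) ≤ ∏ j ∈ s, (1 - u j) :=
      Finset.prod_nonneg fun j hj => by linarith [h1' j hj]
    have hsum : (0 : ℝ) ≤ ∑ j ∈ s, u j := Finset.sum_nonneg h0'
    have hi0 := h0 i (Finset.mem_insert_self i s)
    have hi1 := h1 i (Finset.mem_insert_self i s)
    nlinarith

lemma aux_pochN_lower {q : ℝ} (hq0 : 0 < q) (hq1 : q < 1) (x : ℂ)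
    (hx : ∀ j : ℕ, 1 - x * (q : ℂ) ^ j ≠ 0) :
    ∃ c : ℝ, 0 < c ∧ ∀ n, c ≤ ‖pochN q x n‖ := by
  have hnq : ‖(q : ℂ)‖ = q := by rw [Complex.norm_real, Real.norm_eq_abs, abs_of_pos hq0]
  have h1q : (0 : ℝ) < 1 - q := by linarith
  obtain ⟨J, hJ⟩ : ∃ J : ℕ, ‖x‖ * q ^ J / (1 - q) ≤ 1 / 2 := by
    obtain ⟨J, hJ⟩ := exists_pow_lt_of_lt_one
      (show (0 : ℝ) < (1 - q) / (2 * (‖x‖ + 1)) by positivity) hq1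
    refine ⟨J, ?_⟩
    rw [div_le_iff₀ h1q]
    have hx0 : (0 : ℝ) ≤ ‖x‖ := norm_nonneg x
    have hq' : (0 : ℝ) ≤ q ^ J := pow_nonneg hq0.le J
    rw [lt_div_iff₀ (by positivity : (0:ℝ) < 2 * (‖x‖ + 1))] at hJ
    nlinarith
  have hsmall : ∀ j : ℕ, J ≤ j → ‖x‖ * q ^ j ≤ 1 / 2 := by
    intro j hj
    have h2 : q ^ j ≤ q ^ J := pow_le_pow_of_le_one hq0.le hq1.le hj
    have h3 : ‖x‖ * q ^ J ≤ (1 - q) / 2 := by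
      rw [div_le_iff₀ h1q] at hJ; linarith
    nlinarith [norm_nonneg x, pow_nonneg hq0.le j]
  have key : ∀ n, J ≤ n → ‖pochN q x J‖ * (1 / 2) ≤ ‖pochN q x n‖ := by
    intro n hn
    have hsplit : pochN q x J * ∏ j ∈ Finset.Ico J n, (1 - x * (q : ℂ) ^ j) = pochN q x n :=
      Finset.prod_range_mul_prod_Ico _ hn
    rw [← hsplit, norm_mul]
    refine mul_le_mul_of_nonneg_left ?_ (norm_nonneg _)
    rw [norm_prod]
    have hsum : ∑ j ∈ Finset.Ico J n, ‖x‖ * q ^ j ≤ 1 / 2 := by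
      calc ∑ j ∈ Finset.Ico J n, ‖x‖ * q ^ j = ‖x‖ * ∑ j ∈ Finset.Ico J n, q ^ j := by
            rw [Finset.mul_sum]
        _ ≤ ‖x‖ * (q ^ J * (1 / (1 - q))) := by
            refine mul_le_mul_of_nonneg_left ?_ (norm_nonneg x)
            rw [Finset.sum_Ico_eq_sum_range]
            calc ∑ i ∈ Finset.range (n - J), q ^ (J + i)
                = q ^ J * ∑ i ∈ Finset.range (n - J), q ^ i := by
                  rw [Finset.mul_sum]; exact Finset.sum_congr rfl fun i _ => pow_add q J i
              _ ≤ q ^ J * (1 / (1 - q)) :=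
                  mul_le_mul_of_nonneg_left (aux_geom_sum_le hq0 hq1 _) (pow_nonneg hq0.le J)
        _ ≤ 1 / 2 := by
            rw [show ‖x‖ * (q ^ J * (1 / (1 - q))) = ‖x‖ * q ^ J / (1 - q) from by ring]
            exact hJ
    calc (1 : ℝ) / 2 ≤ 1 - ∑ j ∈ Finset.Ico J n, ‖x‖ * q ^ j := by linarith
      _ ≤ ∏ j ∈ Finset.Ico J n, (1 - ‖x‖ * q ^ j) := by
          refine aux_prod_one_sub_ge _ (fun j _ => by positivity) (fun j hj => ?_)
          have := hsmall j (Finset.mem_Ico.1 hj).1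
          linarith
      _ ≤ ∏ j ∈ Finset.Ico J n, ‖1 - x * (q : ℂ) ^ j‖ := by
          refine Finset.prod_le_prod (fun j hj => ?_) (fun j hj => ?_)
          · have := hsmall j (Finset.mem_Ico.1 hj).1; linarith
          · calc 1 - ‖x‖ * q ^ j = ‖(1 : ℂ)‖ - ‖x * (q : ℂ) ^ j‖ := by
                  rw [norm_one, norm_mul, norm_pow, hnq]
              _ ≤ ‖1 - x * (q : ℂ) ^ j‖ := norm_sub_norm_le _ _
  have hne : (Finset.range (J + 1)).Nonempty := ⟨0, by simp⟩
  set c0 : ℝ := (Finset.range (J + 1)).inf' hne (fun m => ‖pochN q x m‖) with hc0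
  have hc0pos : 0 < c0 := by
    rw [hc0, Finset.lt_inf'_iff]
    exact fun m _ => norm_pos_iff.2 (aux_pochN_ne_zero hx m)
  refine ⟨c0 / 2, by positivity, fun n => ?_⟩
  rcases le_or_gt n J with h | h
  · have h2 : c0 ≤ ‖pochN q x n‖ := Finset.inf'_le _ (Finset.mem_range.2 (by omega))
    linarith
  · have h2 := key n h.le
    have h3 : c0 ≤ ‖pochN q x J‖ := Finset.inf'_le _ (Finset.mem_range.2 (by omega))
    nlinarith [norm_nonneg (pochN q x n)]

/-- The polynomial `P_n(x) = ∏_{j<n} (bx - (b/a) q^{j+1})`. -/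
def Pn (q : ℝ) (a b : ℂ) (n : ℕ) (x : ℂ) : ℂ :=
  ∏ j ∈ Finset.range n, (b * x - b / a * (q : ℂ) ^ (j + 1))

/-- The q-divided difference of `P_n`. -/
def Qn (q : ℝ) (a b : ℂ) : ℕ → ℂ → ℂ
  | 0, _ => 0
  | n + 1, x => Qn q a b n x * (b * x - b / a * (q : ℂ) ^ (n + 1)) + b * Pn q a b n ((q : ℂ) * x)

lemma Qn_zero_eq (q : ℝ) (a b : ℂ) (x : ℂ) : Qn q a b 0 x = 0 := rfl

lemma Qn_succ_eq (q : ℝ) (a b : ℂ) (n : ℕ) (x : ℂ) :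
    Qn q a b (n + 1) x
      = Qn q a b n x * (b * x - b / a * (q : ℂ) ^ (n + 1)) + b * Pn q a b n ((q : ℂ) * x) := rfl

lemma Pn_succ (q : ℝ) (a b : ℂ) (n : ℕ) (x : ℂ) :
    Pn q a b (n + 1) x = Pn q a b n x * (b * x - b / a * (q : ℂ) ^ (n + 1)) :=
  Finset.prod_range_succ _ _

lemma Pn_continuous (q : ℝ) (a b : ℂ) (n : ℕ) : Continuous (Pn q a b n) := by
  unfold Pn
  exact continuous_finset_prod _ fun j _ => by continuity

lemma Qn_continuous (q : ℝ) (a b : ℂ) (n : ℕ) : Continuous (Qn q a b n) := by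
  induction n with
  | zero => simpa [funext (Qn_zero_eq q a b)] using continuous_const
  | succ n ih =>
    have h1 : Continuous fun x : ℂ => Pn q a b n ((q : ℂ) * x) :=
      (Pn_continuous q a b n).comp (continuous_const.mul continuous_id)
    rw [show Qn q a b (n + 1) = fun x => Qn q a b n x * (b * x - b / a * (q : ℂ) ^ (n + 1)) + b * Pn q a b n ((q : ℂ) * x) from funext (Qn_succ_eq q a b n)]
    exact (ih.mul (by continuity)).add (continuous_const.mul h1)

lemma Pn_sub (q : ℝ) (a b : ℂ) (n : ℕ) (x : ℂ) :
    Pn q a b n x - Pn q a b n ((q : ℂ) * x) = (1 - (q : ℂ)) * x * Qn q a b n x := by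
  induction n with
  | zero => simp [Pn, Qn_zero_eq]
  | succ n ih =>
    rw [Qn_succ_eq, Pn_succ, Pn_succ]
    linear_combination (b * x - b / a * (q : ℂ) ^ (n + 1)) * ih

lemma Pn_zero (q : ℝ) (a b : ℂ) (n : ℕ) :
    Pn q a b n 0 = (-(b / a)) ^ n * (q : ℂ) ^ ((n + 1).choose 2) := by
  induction n with
  | zero => simp [Pn]
  | succ n ih =>
    rw [Pn_succ, ih,
      show (n + 1 + 1).choose 2 = (n + 1) + (n + 1).choose 2 by
        rw [Nat.choose_succ_succ' (n + 1) 1, Nat.choose_one_right],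
      pow_add]
    ring

lemma Qn_zeroval (q : ℝ) (a b : ℂ) (m : ℕ) :
    (1 - (q : ℂ)) * Qn q a b (m + 1) 0
      = b * (-(b / a)) ^ m * (q : ℂ) ^ ((m + 1).choose 2) * (1 - (q : ℂ) ^ (m + 1)) := by
  induction m with
  | zero =>
    rw [Qn_succ_eq, Qn_zero_eq]
    simp only [Pn, Finset.range_zero, Finset.prod_empty, mul_zero, zero_mul, zero_add, mul_one,
      pow_zero, pow_one]
    rw [show (Nat.choose 1 2) = 0 from rfl, pow_zero]
    ring
  | succ m ih =>
    rw [Qn_succ_eq]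
    simp only [mul_zero]
    rw [Pn_zero,
      show (m + 1 + 1).choose 2 = (m + 1).choose 2 + (m + 1) by
        rw [Nat.choose_succ_succ' (m + 1) 1, Nat.choose_one_right]
        exact Nat.add_comm _ _,
      pow_add]
    linear_combination (0 - b / a * (q : ℂ) ^ (m + 1 + 1)) * ih

lemma factor_bound {q : ℝ} (hq0 : 0 < q) (hq1 : q < 1) (a b : ℂ) (hb : b ≠ 0)
    (j : ℕ) (x : ℂ) (hx : ‖x‖ ≤ 1 / (2 * ‖b‖)) :
    ‖b * x - b / a * (q : ℂ) ^ (j + 1)‖ ≤ 1 / 2 * Real.exp (2 * ‖b / a‖ * q * q ^ j) := by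
  have hnq : ‖(q : ℂ)‖ = q := by rw [Complex.norm_real, Real.norm_eq_abs, abs_of_pos hq0]
  have hbn : (0 : ℝ) < ‖b‖ := norm_pos_iff.2 hb
  have h1 : ‖b * x‖ ≤ 1 / 2 := by
    rw [norm_mul]
    calc ‖b‖ * ‖x‖ ≤ ‖b‖ * (1 / (2 * ‖b‖)) := mul_le_mul_of_nonneg_left hx (norm_nonneg b)
      _ = 1 / 2 := by
          rw [mul_one_div, div_eq_div_iff (by positivity) (by positivity : (2:ℝ) ≠ 0)]; ring
  have h2 : ‖b / a * (q : ℂ) ^ (j + 1)‖ = ‖b / a‖ * q * q ^ j := by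
    rw [norm_mul, norm_pow, hnq, pow_succ]; ring
  have h3 := Real.add_one_le_exp (2 * ‖b / a‖ * q * q ^ j)
  have h4 : (0 : ℝ) ≤ ‖b / a‖ * q * q ^ j := by positivity
  calc ‖b * x - b / a * (q : ℂ) ^ (j + 1)‖ ≤ ‖b * x‖ + ‖b / a * (q : ℂ) ^ (j + 1)‖ :=
        norm_sub_le _ _
    _ ≤ 1 / 2 + ‖b / a‖ * q * q ^ j := by rw [← h2] at *; linarith
    _ ≤ 1 / 2 * Real.exp (2 * ‖b / a‖ * q * q ^ j) := by linarith

lemma Pn_bound {q : ℝ} (hq0 : 0 < q) (hq1 : q < 1) (a b : ℂ) (hb : b ≠ 0)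
    (n : ℕ) (x : ℂ) (hx : ‖x‖ ≤ 1 / (2 * ‖b‖)) :
    ‖Pn q a b n x‖
      ≤ (1 / 2) ^ n * Real.exp (2 * ‖b / a‖ * q * ∑ j ∈ Finset.range n, q ^ j) := by
  rw [Pn, norm_prod]
  calc ∏ j ∈ Finset.range n, ‖b * x - b / a * (q : ℂ) ^ (j + 1)‖
      ≤ ∏ j ∈ Finset.range n, (1 / 2 * Real.exp (2 * ‖b / a‖ * q * q ^ j)) :=
        Finset.prod_le_prod (fun j _ => norm_nonneg _)
          (fun j _ => factor_bound hq0 hq1 a b hb j x hx)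
    _ = (1 / 2) ^ n * Real.exp (2 * ‖b / a‖ * q * ∑ j ∈ Finset.range n, q ^ j) := by
        rw [Finset.prod_mul_distrib, Finset.prod_const, Finset.card_range, ← Real.exp_sum,
          Finset.mul_sum]

lemma Qn_bound {q : ℝ} (hq0 : 0 < q) (hq1 : q < 1) (a b : ℂ) (hb : b ≠ 0)
    (n : ℕ) (x : ℂ) (hx : ‖x‖ ≤ 1 / (2 * ‖b‖)) :
    ‖Qn q a b n x‖
      ≤ 2 * ‖b‖ * Real.exp (2 * ‖b / a‖ * q * ∑ j ∈ Finset.range n, q ^ j)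
          * n * (1 / 2) ^ n := by
  induction n with
  | zero => simp [Qn_zero_eq]
  | succ n ih =>
    have hnq : ‖(q : ℂ)‖ = q := by rw [Complex.norm_real, Real.norm_eq_abs, abs_of_pos hq0]
    have hqx : ‖(q : ℂ) * x‖ ≤ 1 / (2 * ‖b‖) := by
      rw [norm_mul, hnq]
      nlinarith [norm_nonneg x]
    have hfac := factor_bound hq0 hq1 a b hb n x hx
    have hP := Pn_bound hq0 hq1 a b hb n ((q : ℂ) * x) hqx
    set M : ℝ := Real.exp (2 * ‖b / a‖ * q * ∑ j ∈ Finset.range n, q ^ j) with hM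
    have hMpos : 0 < M := Real.exp_pos _
    have he : Real.exp (2 * ‖b / a‖ * q * ∑ j ∈ Finset.range (n + 1), q ^ j)
        = M * Real.exp (2 * ‖b / a‖ * q * q ^ n) := by
      rw [hM, ← Real.exp_add, Finset.sum_range_succ]
      congr 1
      ring
    have hepos : (0 : ℝ) < Real.exp (2 * ‖b / a‖ * q * q ^ n) := Real.exp_pos _
    have he1 : (1 : ℝ) ≤ Real.exp (2 * ‖b / a‖ * q * q ^ n) :=
      Real.one_le_exp (by positivity)
    rw [Qn_succ_eq, he]
    push_cast
    calc ‖Qn q a b n x * (b * x - b / a * (q : ℂ) ^ (n + 1)) + b * Pn q a b n ((q : ℂ) * x)‖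
        ≤ ‖Qn q a b n x‖ * ‖b * x - b / a * (q : ℂ) ^ (n + 1)‖ + ‖b‖ * ‖Pn q a b n ((q : ℂ) * x)‖ := by
          calc _ ≤ ‖Qn q a b n x * (b * x - b / a * (q : ℂ) ^ (n + 1))‖
                + ‖b * Pn q a b n ((q : ℂ) * x)‖ := norm_add_le _ _
            _ = _ := by rw [norm_mul, norm_mul]
      _ ≤ (2 * ‖b‖ * M * n * (1 / 2) ^ n) * (1 / 2 * Real.exp (2 * ‖b / a‖ * q * q ^ n))
            + ‖b‖ * ((1 / 2) ^ n * M) := by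
          have h1 : (0:ℝ) ≤ ‖Qn q a b n x‖ := norm_nonneg _
          have h2 : (0:ℝ) ≤ ‖b * x - b / a * (q : ℂ) ^ (n + 1)‖ := norm_nonneg _
          have h3 : (0:ℝ) ≤ 2 * ‖b‖ * M * n * (1 / 2) ^ n := by positivity
          gcongr
      _ ≤ 2 * ‖b‖ * (M * Real.exp (2 * ‖b / a‖ * q * q ^ n)) * (n + 1) * (1 / 2) ^ (n + 1) := by
          have hp : (0:ℝ) < (1 / 2 : ℝ) ^ n := by positivity
          have hbn : (0 : ℝ) < ‖b‖ := norm_pos_iff.2 hb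
          rw [pow_succ]
          nlinarith [mul_pos hbn (mul_pos hMpos hp)]
    -- done
set_option maxHeartbeats 1600000
/-- `φ_γ` is continuously q-differentiable at the origin, with the
indicated limit values. -/
theorem statement6 (q zm zp : ℝ) (a b c d : ℂ)
    (hq0 : 0 < q) (hq1 : q < 1) (hzm : zm < 0) (hzp : 0 < zp)
    (hPg : memPgen q zm zp a b c d) (γ : ℂ) (hγ : γ ≠ 0) :
    Tendsto (fun k : ℕ => phi q a b c d γ ((zm * q ^ k : ℝ) : ℂ)) atTop
      (nhds (phiZeroVal q a b c d γ)) ∧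
    Tendsto (fun k : ℕ => phi q a b c d γ ((zp * q ^ k : ℝ) : ℂ)) atTop
      (nhds (phiZeroVal q a b c d γ)) ∧
    Tendsto (fun k : ℕ => Dq q (fun x : ℝ => phi q a b c d γ (x : ℂ)) (zm * q ^ k)) atTop
      (nhds (phiZeroDer q a b c d γ)) ∧
    Tendsto (fun k : ℕ => Dq q (fun x : ℝ => phi q a b c d γ (x : ℂ)) (zp * q ^ k)) atTop
      (nhds (phiZeroDer q a b c d γ)) := by
  obtain ⟨hP, hcd, hgen⟩ := hPg
  obtain ⟨ha, hb, -, -, -, -, -, -⟩ := hP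
  have hqC : (q : ℂ) ≠ 0 := Complex.ofReal_ne_zero.2 hq0.ne'
  have h1qR : (0 : ℝ) < 1 - q := by linarith
  have hq1C : (1 : ℂ) - (q : ℂ) ≠ 0 := by
    intro h
    have h2 : ((1 - q : ℝ) : ℂ) = 0 := by push_cast; linear_combination h
    rw [Complex.ofReal_eq_zero] at h2
    linarith
  have hqf : ∀ j : ℕ, (1 : ℂ) - (q : ℂ) * (q : ℂ) ^ j ≠ 0 := by
    intro j h
    have h2 : ((1 - q ^ (j + 1) : ℝ) : ℂ) = 0 := by push_cast; linear_combination h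
    rw [Complex.ofReal_eq_zero] at h2
    have h3 : q ^ (j + 1) < 1 := pow_lt_one₀ hq0.le hq1 (by omega)
    linarith
  have hfam : ∀ e : ℂ, (∀ k : ℤ, e / a ≠ (q : ℂ) ^ k) →
      ∀ j : ℕ, (1 : ℂ) - e * (q : ℂ) / a * (q : ℂ) ^ j ≠ 0 := by
    intro e he j h
    apply he (-(j + 1 : ℕ) : ℤ)
    rw [zpow_neg, zpow_natCast]
    refine eq_inv_of_mul_eq_one_left ?_
    linear_combination -h
  have hcf := hfam c (fun k => (hgen k).1)
  have hdf := hfam d (fun k => (hgen k).2.2.1)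
  have hcf2 : ∀ j : ℕ, (1 : ℂ) - c * (q : ℂ) ^ 2 / a * (q : ℂ) ^ j ≠ 0 := by
    intro j h; exact hcf (j + 1) (by linear_combination h)
  have hdf2 : ∀ j : ℕ, (1 : ℂ) - d * (q : ℂ) ^ 2 / a * (q : ℂ) ^ j ≠ 0 := by
    intro j h; exact hdf (j + 1) (by linear_combination h)
  have h1cq : (1 : ℂ) - c * (q : ℂ) / a ≠ 0 := by simpa using hcf 0
  have h1dq : (1 : ℂ) - d * (q : ℂ) / a ≠ 0 := by simpa using hdf 0
  set Cn : ℕ → ℂ := fun n => pochN q (sP q a b c d * γ) n * pochN q (sP q a b c d / γ) n /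
      (pochN q q n * pochN q (c * (q : ℂ) / a) n * pochN q (d * (q : ℂ) / a) n) with hCn
  obtain ⟨c1, hc10, hc1⟩ := aux_pochN_lower hq0 hq1 (q : ℂ) hqf
  obtain ⟨c2, hc20, hc2⟩ := aux_pochN_lower hq0 hq1 (c * (q : ℂ) / a) hcf
  obtain ⟨c3, hc30, hc3⟩ := aux_pochN_lower hq0 hq1 (d * (q : ℂ) / a) hdf
  set K : ℝ := Real.exp (‖sP q a b c d * γ‖ / (1 - q)) *
      Real.exp (‖sP q a b c d / γ‖ / (1 - q)) / (c1 * c2 * c3) with hK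
  have hKpos : 0 < K := by rw [hK]; positivity
  have hCb : ∀ n, ‖Cn n‖ ≤ K := by
    intro n
    simp only [hCn]
    rw [norm_div, norm_mul, norm_mul, norm_mul, hK]
    refine div_le_div₀ (by positivity) ?_ (by positivity) ?_
    · exact mul_le_mul (aux_pochN_norm_le hq0 hq1 _ n) (aux_pochN_norm_le hq0 hq1 _ n)
        (norm_nonneg _) (Real.exp_pos _).le
    · exact mul_le_mul (mul_le_mul (hc1 n) (hc2 n) hc20.le (norm_nonneg _)) (hc3 n)
        hc30.le (by positivity)
  have hbn : (0 : ℝ) < ‖b‖ := norm_pos_iff.2 hb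
  set R : ℝ := 1 / (2 * ‖b‖) with hR
  have hRpos : 0 < R := by rw [hR]; positivity
  set E : ℝ := Real.exp (2 * ‖b / a‖ * q * (1 / (1 - q))) with hE
  have hEpos : 0 < E := Real.exp_pos _
  have hEn : ∀ n : ℕ, Real.exp (2 * ‖b / a‖ * q * ∑ j ∈ Finset.range n, q ^ j) ≤ E := by
    intro n; rw [hE]
    exact Real.exp_le_exp.2 (mul_le_mul_of_nonneg_left (aux_geom_sum_le hq0 hq1 n) (by positivity))
  have hPB : ∀ (n : ℕ) (x : ℂ), ‖x‖ ≤ R → ‖Cn n * Pn q a b n x‖ ≤ K * E * (1 / 2) ^ n := by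
    intro n x hx
    rw [norm_mul]
    calc ‖Cn n‖ * ‖Pn q a b n x‖
        ≤ K * ((1 / 2) ^ n * Real.exp (2 * ‖b / a‖ * q * ∑ j ∈ Finset.range n, q ^ j)) :=
          mul_le_mul (hCb n) (Pn_bound hq0 hq1 a b hb n x hx) (norm_nonneg _) hKpos.le
      _ ≤ K * ((1 / 2) ^ n * E) := by
          gcongr
          exact hEn n
      _ = K * E * (1 / 2) ^ n := by ring
  have hQB : ∀ (n : ℕ) (x : ℂ), ‖x‖ ≤ R →
      ‖Cn n * Qn q a b n x‖ ≤ (K * (2 * ‖b‖) * E) * ((n : ℝ) * (1 / 2) ^ n) := by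
    intro n x hx
    rw [norm_mul]
    calc ‖Cn n‖ * ‖Qn q a b n x‖
        ≤ K * (2 * ‖b‖ * Real.exp (2 * ‖b / a‖ * q * ∑ j ∈ Finset.range n, q ^ j) * n
            * (1 / 2) ^ n) :=
          mul_le_mul (hCb n) (Qn_bound hq0 hq1 a b hb n x hx) (norm_nonneg _) hKpos.le
      _ ≤ (K * (2 * ‖b‖) * E) * ((n : ℝ) * (1 / 2) ^ n) := by
          rw [show (K * (2 * ‖b‖) * E) * ((n : ℝ) * (1 / 2) ^ n)
              = K * (2 * ‖b‖ * E * n * (1 / 2) ^ n) from by ring]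
          gcongr
          exact hEn n
  have hsum1 : Summable (fun n : ℕ => K * E * (1 / 2 : ℝ) ^ n) :=
    (summable_geometric_of_lt_one (by norm_num) (by norm_num)).mul_left _
  have hsum2 : Summable (fun n : ℕ => (K * (2 * ‖b‖) * E) * ((n : ℝ) * (1 / 2) ^ n)) := by
    have h := summable_pow_mul_geometric_of_norm_lt_one (R := ℝ) 1
      (r := (1 / 2 : ℝ)) (by rw [Real.norm_eq_abs, _root_.abs_of_nonneg (by norm_num : (0:ℝ) ≤ 1/2)]; norm_num)
    simpa [pow_one] using h.mul_left (K * (2 * ‖b‖) * E)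
  have hS1 : ∀ x : ℂ, ‖x‖ ≤ R → Summable (fun n => Cn n * Pn q a b n x) := fun x hx =>
    hsum1.of_norm_bounded (fun n => hPB n x hx)
  have hSQ : ∀ x : ℂ, ‖x‖ ≤ R → Summable (fun n => Cn n * Qn q a b n x) := fun x hx =>
    hsum2.of_norm_bounded (fun n => hQB n x hx)
  have hphi : ∀ x : ℂ, x ≠ 0 → phi q a b c d γ x = ∑' n, Cn n * Pn q a b n x := by
    intro x hx
    rw [phi]
    refine tsum_congr fun n => ?_
    have key : pochN q ((q : ℂ) / (a * x)) n * (b * x) ^ n = Pn q a b n x := by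
      rw [Pn, pochN, show (b * x) ^ n = ∏ _j ∈ Finset.range n, (b * x) from by
        rw [Finset.prod_const, Finset.card_range], ← Finset.prod_mul_distrib]
      refine Finset.prod_congr rfl fun j _ => ?_
      field_simp
      ring
    simp only [hCn]
    rw [← key]
    ring
  have hT0 : ∀ X : ℕ → ℂ, Tendsto X atTop (nhds 0) →
      Tendsto (fun k => ∑' n, Cn n * Pn q a b n (X k)) atTop
        (nhds (∑' n, Cn n * Pn q a b n 0)) := by
    intro X hX
    have hev : ∀ᶠ k in atTop, ‖X k‖ ≤ R := by
      have h2 : Tendsto (fun k => ‖X k‖) atTop (nhds 0) := by simpa using hX.norm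
      exact h2.eventually (eventually_le_nhds hRpos)
    refine tendsto_tsum_of_dominated_convergence hsum1 (fun n => ?_) ?_
    · exact ((continuous_const.mul (Pn_continuous q a b n)).tendsto 0).comp hX
    · filter_upwards [hev] with k hk
      intro n
      exact hPB n (X k) hk
  have hT1 : ∀ X : ℕ → ℂ, Tendsto X atTop (nhds 0) →
      Tendsto (fun k => ∑' n, Cn n * Qn q a b n (X k)) atTop
        (nhds (∑' n, Cn n * Qn q a b n 0)) := by
    intro X hX
    have hev : ∀ᶠ k in atTop, ‖X k‖ ≤ R := by
      have h2 : Tendsto (fun k => ‖X k‖) atTop (nhds 0) := by simpa using hX.norm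
      exact h2.eventually (eventually_le_nhds hRpos)
    refine tendsto_tsum_of_dominated_convergence hsum2 (fun n => ?_) ?_
    · exact ((continuous_const.mul (Qn_continuous q a b n)).tendsto 0).comp hX
    · filter_upwards [hev] with k hk
      intro n
      exact hQB n (X k) hk
  have hzv : phiZeroVal q a b c d γ = ∑' n, Cn n * Pn q a b n 0 := by
    rw [phiZeroVal]
    refine tsum_congr fun n => ?_
    simp only [hCn]
    rw [Pn_zero, ← Nat.choose_two_right,
      show (n + 1).choose 2 = n.choose 2 + n by
        rw [Nat.choose_succ_succ' n 1, Nat.choose_one_right]; exact Nat.add_comm _ _,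
      pow_add]
    ring
  have hX : ∀ z : ℝ, Tendsto (fun k : ℕ => ((z * q ^ k : ℝ) : ℂ)) atTop (nhds 0) := by
    intro z
    have h2 : Tendsto (fun k : ℕ => z * q ^ k) atTop (nhds 0) := by
      have h3 := (tendsto_pow_atTop_nhds_zero_of_lt_one hq0.le hq1).const_mul z
      simpa using h3
    have h4 : Tendsto (fun k : ℕ => ((z * q ^ k : ℝ) : ℂ)) atTop (nhds ((0 : ℝ) : ℂ)) :=
      (Complex.continuous_ofReal.tendsto 0).comp h2
    rwa [Complex.ofReal_zero] at h4
  have hneq : ∀ z : ℝ, z ≠ 0 → ∀ k : ℕ, ((z * q ^ k : ℝ) : ℂ) ≠ 0 := fun z hz k =>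
    Complex.ofReal_ne_zero.2 (mul_ne_zero hz (pow_ne_zero _ hq0.ne'))
  have hDqEq : ∀ x : ℝ, x ≠ 0 → ‖((x : ℝ) : ℂ)‖ ≤ R →
      Dq q (fun t : ℝ => phi q a b c d γ (t : ℂ)) x = ∑' n, Cn n * Qn q a b n (x : ℂ) := by
    intro x hx hxR
    have hx' : (x : ℂ) ≠ 0 := Complex.ofReal_ne_zero.2 hx
    have hnq : ‖(q : ℂ)‖ = q := by rw [Complex.norm_real, Real.norm_eq_abs, abs_of_pos hq0]
    have hqxR : ‖(q : ℂ) * (x : ℂ)‖ ≤ R := by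
      rw [norm_mul, hnq]
      nlinarith [norm_nonneg ((x : ℝ) : ℂ)]
    simp only [Dq]
    rw [hphi _ hx', show ((q * x : ℝ) : ℂ) = (q : ℂ) * (x : ℂ) from by push_cast; ring,
      hphi _ (mul_ne_zero hqC hx'),
      ← Summable.tsum_sub (hS1 _ hxR) (hS1 _ hqxR), ← tsum_div_const]
    refine tsum_congr fun n => ?_
    rw [← mul_sub, Pn_sub,
      show Cn n * ((1 - (q : ℂ)) * (x : ℂ) * Qn q a b n (x : ℂ))
        = ((1 - (q : ℂ)) * (x : ℂ)) * (Cn n * Qn q a b n (x : ℂ)) from by ring]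
    exact mul_div_cancel_left₀ _ (mul_ne_zero hq1C hx')
  have hQ0 : ∀ m : ℕ, Qn q a b (m + 1) 0
      = b * (-(b / a)) ^ m * (q : ℂ) ^ ((m + 1).choose 2) * (1 - (q : ℂ) ^ (m + 1))
          / (1 - (q : ℂ)) := by
    intro m
    rw [eq_div_iff hq1C]
    linear_combination Qn_zeroval q a b m
  have hdzv : phiZeroDer q a b c d γ = ∑' n, Cn n * Qn q a b n 0 := by
    have hsQ0 : Summable (fun n => Cn n * Qn q a b n 0) := hSQ 0 (by simpa using hRpos.le)
    rw [Summable.tsum_eq_zero_add hsQ0, Qn_zero_eq, mul_zero, zero_add, phiZeroDer, ← tsum_mul_left]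
    refine tsum_congr fun m => ?_
    simp only [hCn]
    rw [hQ0 m,
      aux_pochN_shift q (sP q a b c d * γ) m, aux_pochN_shift q (sP q a b c d / γ) m,
      aux_pochN_succ q (q : ℂ) m,
      aux_pochN_shift q (c * (q : ℂ) / a) m, aux_pochN_shift q (d * (q : ℂ) / a) m,
      show (q : ℂ) * (sP q a b c d * γ) = sP q a b c d * (q : ℂ) * γ from by ring,
      show (q : ℂ) * (sP q a b c d / γ) = sP q a b c d * (q : ℂ) / γ from by ring,
      show (q : ℂ) * (c * (q : ℂ) / a) = c * (q : ℂ) ^ 2 / a from by ring,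
      show (q : ℂ) * (d * (q : ℂ) / a) = d * (q : ℂ) ^ 2 / a from by ring,
      ← Nat.choose_two_right,
      show (m + 1).choose 2 = m.choose 2 + m by
        rw [Nat.choose_succ_succ' m 1, Nat.choose_one_right]; exact Nat.add_comm _ _,
      pow_add]
    have hpq : pochN q (q : ℂ) m ≠ 0 := aux_pochN_ne_zero hqf m
    have hpc : pochN q (c * (q : ℂ) ^ 2 / a) m ≠ 0 := aux_pochN_ne_zero hcf2 m
    have hpd : pochN q (d * (q : ℂ) ^ 2 / a) m ≠ 0 := aux_pochN_ne_zero hdf2 m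
    have hqm : (1 : ℂ) - (q : ℂ) * (q : ℂ) ^ m ≠ 0 := hqf m
    rw [show b * (q : ℂ) / a = b / a * (q : ℂ) from by ring,
      show ((q : ℂ)) ^ (m + 1) = (q : ℂ) * (q : ℂ) ^ m from pow_succ' _ _]
    set P1 := pochN q (sP q a b c d * (q : ℂ) * γ) m with hSP1
    set P2 := pochN q (sP q a b c d * (q : ℂ) / γ) m with hSP2
    set D1 := pochN q (q : ℂ) m with hSD1
    set D2 := pochN q (c * (q : ℂ) ^ 2 / a) m with hSD2
    set D3 := pochN q (d * (q : ℂ) ^ 2 / a) m with hSD3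
    set t := b / a with hTT
    set u1 := 1 - sP q a b c d * γ with hu1
    set u2 := 1 - sP q a b c d / γ with hu2
    set e1 := (1 : ℂ) - c * (q : ℂ) / a with he1
    set e2 := (1 : ℂ) - d * (q : ℂ) / a with he2
    set g := (1 : ℂ) - (q : ℂ) * (q : ℂ) ^ m with hg
    clear_value P1 P2 D1 D2 D3 t u1 u2 e1 e2 g
    field_simp [hq1C, h1cq, h1dq, hqm, hpq, hpc, hpd]
    ring
  refine ⟨?_, ?_, ?_, ?_⟩
  · rw [hzv]
    exact (hT0 _ (hX zm)).congr fun k => (hphi _ (hneq zm hzm.ne k)).symm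
  · rw [hzv]
    exact (hT0 _ (hX zp)).congr fun k => (hphi _ (hneq zp hzp.ne' k)).symm
  · rw [hdzv]
    have hev : ∀ᶠ k in atTop, ‖((zm * q ^ k : ℝ) : ℂ)‖ ≤ R := by
      have h2 : Tendsto (fun k : ℕ => ‖((zm * q ^ k : ℝ) : ℂ)‖) atTop (nhds 0) := by
        simpa using (hX zm).norm
      exact h2.eventually (eventually_le_nhds hRpos)
    refine (hT1 _ (hX zm)).congr' ?_
    filter_upwards [hev] with k hk
    exact (hDqEq (zm * q ^ k) (mul_ne_zero hzm.ne (pow_ne_zero _ hq0.ne')) hk).symm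
  · rw [hdzv]
    have hev : ∀ᶠ k in atTop, ‖((zp * q ^ k : ℝ) : ℂ)‖ ≤ R := by
      have h2 : Tendsto (fun k : ℕ => ‖((zp * q ^ k : ℝ) : ℂ)‖) atTop (nhds 0) := by
        simpa using (hX zp).norm
      exact h2.eventually (eventually_le_nhds hRpos)
    refine (hT1 _ (hX zp)).congr' ?_
    filter_upwards [hev] with k hk
    exact (hDqEq (zp * q ^ k) (mul_ne_zero hzp.ne' (pow_ne_zero _ hq0.ne')) hk).symm
end VVBQJ
end
end
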